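/- arXiv:1801.06754 — 8 statements merged into one kernel-verified Lean document; each statement's English description precedes it below -/
import Mathlib

section
/- Let G be a finite simple graph whose vertex set is partitioned into disjoint sets V_1, ..., V_t, and let c_1, ..., c_t be positive reals such that the sum-color cost of the induced subgraph satisfies ŝ(G[V_i]) ≤ c_i·|V_i| for each i. Then ŝ(G) ≤ ( Σ_{i=1}^{t} √(c_i·|V_i|) )². -/
open Finset

/-- Auxiliary fuelled recursion for the slow-coloring game value.
`slowAux G n S` computes the value of the slow-coloring game on the
subgraph of `G` induced by the set `S` of (uncolored) vertices, provided
`n ≥ S.card`. -/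
noncomputable def slowAux {V : Type*} [DecidableEq V] (G : SimpleGraph V) :
    ℕ → Finset V → ℕ
  | 0, _ => 0
  | n + 1, S =>
      (S.powerset.filter fun M => M.Nonempty).sup fun M =>
        M.card + sInf {k : ℕ | ∃ X : Finset V, X ⊆ M ∧ X.Nonempty ∧
          (∀ x ∈ X, ∀ y ∈ X, ¬ G.Adj x y) ∧ k = slowAux G n (S \ X)}

/-- The sum-color cost `ŝ(G[S])` of the subgraph of `G` induced by the
vertex set `S`. -/
noncomputable def slowCost {V : Type*} [DecidableEq V] (G : SimpleGraph V)
    (S : Finset V) : ℕ :=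
  slowAux G S.card S

section Aux
variable {V : Type*} [DecidableEq V] (G : SimpleGraph V)

lemma slowAux_empty (n : ℕ) : slowAux G n (∅ : Finset V) = 0 := by
  cases n with
  | zero => rw [slowAux]
  | succ n => rw [slowAux]; simp

lemma card_sdiff_lt {S X : Finset V} (hXS : X ⊆ S) (hX : X.Nonempty) :
    (S \ X).card < S.card :=
  Finset.card_lt_card (Finset.sdiff_ssubset hXS hX)

lemma slowAux_fuel : ∀ n m (S : Finset V), S.card ≤ n → S.card ≤ m →
    slowAux G n S = slowAux G m S := by
  intro n
  induction n with
  | zero =>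
    intro m S h _
    rw [Nat.le_zero, Finset.card_eq_zero] at h
    subst h
    rw [slowAux_empty, slowAux_empty]
  | succ n ih =>
    intro m S hn hm
    cases m with
    | zero =>
      rw [Nat.le_zero, Finset.card_eq_zero] at hm
      subst hm
      rw [slowAux_empty, slowAux_empty]
    | succ m =>
      rw [slowAux, slowAux]
      apply Finset.sup_congr rfl
      intro M hM
      simp only [Finset.mem_filter, Finset.mem_powerset] at hM
      have key : ∀ X : Finset V, X ⊆ M → X.Nonempty →
          slowAux G n (S \ X) = slowAux G m (S \ X) := by
        intro X hXM hXne
        have h1 : (S \ X).card < S.card := card_sdiff_lt (hXM.trans hM.1) hXne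
        exact ih m (S \ X) (by omega) (by omega)
      congr 1
      congr 1
      ext k
      simp only [Set.mem_setOf_eq]
      constructor
      · rintro ⟨X, h1, h2, h3, h4⟩
        exact ⟨X, h1, h2, h3, h4.trans (key X h1 h2)⟩
      · rintro ⟨X, h1, h2, h3, h4⟩
        exact ⟨X, h1, h2, h3, h4.trans (key X h1 h2).symm⟩

lemma slowAux_eq_slowCost {n : ℕ} {S : Finset V} (h : S.card ≤ n) :
    slowAux G n S = slowCost G S :=
  slowAux_fuel G n S.card S h le_rfl

lemma slowCost_empty : slowCost G (∅ : Finset V) = 0 := by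
  rw [slowCost, slowAux_empty]

/-- Painter's step: for every marked set `M`, Painter has a good response. -/
lemma painter_step (S M : Finset V) (hMS : M ⊆ S) (hM : M.Nonempty) :
    ∃ X : Finset V, X ⊆ M ∧ X.Nonempty ∧ (∀ x ∈ X, ∀ y ∈ X, ¬ G.Adj x y) ∧
      M.card + slowCost G (S \ X) ≤ slowCost G S := by
  have hSne : S.Nonempty := hM.mono hMS
  obtain ⟨m, hm⟩ : ∃ m, S.card = m + 1 :=
    ⟨S.card - 1, (Nat.succ_pred_eq_of_pos hSne.card_pos).symm⟩
  have hrw : slowCost G S = slowAux G (m + 1) S := by rw [slowCost, hm]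
  rw [hrw, slowAux]
  set T : Set ℕ := {k : ℕ | ∃ X : Finset V, X ⊆ M ∧ X.Nonempty ∧
      (∀ x ∈ X, ∀ y ∈ X, ¬ G.Adj x y) ∧ k = slowAux G m (S \ X)} with hT
  have hTne : T.Nonempty := by
    obtain ⟨x, hx⟩ := hM
    exact ⟨slowAux G m (S \ {x}), {x}, Finset.singleton_subset_iff.mpr hx,
      Finset.singleton_nonempty x,
      by intro a ha b hb
         rw [Finset.mem_singleton] at ha hb
         subst ha; subst hb; exact G.loopless.irrefl _, rfl⟩
  obtain ⟨X, hXM, hXne, hXind, hXval⟩ := Nat.sInf_mem hTne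
  refine ⟨X, hXM, hXne, hXind, ?_⟩
  have hfuel : slowAux G m (S \ X) = slowCost G (S \ X) := by
    apply slowAux_eq_slowCost
    have := card_sdiff_lt (S := S) (X := X) (hXM.trans hMS) hXne
    omega
  have hle : M.card + sInf T ≤ (S.powerset.filter fun M => M.Nonempty).sup fun M =>
      M.card + sInf {k : ℕ | ∃ X : Finset V, X ⊆ M ∧ X.Nonempty ∧
        (∀ x ∈ X, ∀ y ∈ X, ¬ G.Adj x y) ∧ k = slowAux G m (S \ X)} := by
    exact Finset.le_sup (f := fun M => M.card + sInf {k : ℕ | ∃ X : Finset V, X ⊆ M ∧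
        X.Nonempty ∧ (∀ x ∈ X, ∀ y ∈ X, ¬ G.Adj x y) ∧ k = slowAux G m (S \ X)})
      (by simp only [Finset.mem_filter, Finset.mem_powerset]; exact ⟨hMS, hM⟩)
  calc M.card + slowCost G (S \ X) = M.card + sInf T := by rw [← hfuel, ← hXval]
    _ ≤ _ := hle

end Aux
section Main

variable {V : Type*} [DecidableEq V]

lemma main_lemma (G : SimpleGraph V) (t : ℕ) (Vs : Fin t → Finset V)
    (r : Fin t → ℝ) (hr0 : ∀ i, 0 ≤ r i) (hrz : ∀ i, r i = 0 → Vs i = ∅)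
    (hdisj : ∀ i j, i ≠ j → Disjoint (Vs i) (Vs j))
    (hcover : ∀ v : V, ∃ i, v ∈ Vs i) :
    ∀ n (S : Finset V), S.card ≤ n →
      (slowCost G S : ℝ) ≤ ∑ i, (∑ k, r k) / r i * (slowCost G (S ∩ Vs i) : ℝ) := by
  intro n
  induction n with
  | zero =>
    intro S hS
    rw [Nat.le_zero, Finset.card_eq_zero] at hS
    subst hS
    simp [slowCost_empty]
  | succ n ih =>
    intro S hS
    rcases S.eq_empty_or_nonempty with rfl | hSne
    · simp [slowCost_empty]
    have hβ0 : (0:ℝ) ≤ ∑ k, r k := Finset.sum_nonneg fun i _ => hr0 i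
    obtain ⟨m, hm⟩ : ∃ m, S.card = m + 1 :=
      ⟨S.card - 1, (Nat.succ_pred_eq_of_pos hSne.card_pos).symm⟩
    have hrw : slowCost G S = slowAux G (m + 1) S := by rw [slowCost, hm]
    rw [hrw, slowAux]
    have hfil : (S.powerset.filter fun M => M.Nonempty).Nonempty :=
      ⟨S, by simp only [Finset.mem_filter, Finset.mem_powerset]
             exact ⟨Finset.Subset.refl S, hSne⟩⟩
    obtain ⟨M, hMmem, hsup⟩ := Finset.exists_mem_eq_sup _ hfil
      (fun M => M.card + sInf {k : ℕ | ∃ X : Finset V, X ⊆ M ∧ X.Nonempty ∧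
          (∀ x ∈ X, ∀ y ∈ X, ¬ G.Adj x y) ∧ k = slowAux G m (S \ X)})
    rw [hsup]
    simp only [Finset.mem_filter, Finset.mem_powerset] at hMmem
    obtain ⟨hMS, hMne⟩ := hMmem
    -- choose the best part j
    obtain ⟨v₀, hv₀⟩ := hMne
    obtain ⟨i₀, hi₀⟩ := hcover v₀
    have htne : (Finset.univ : Finset (Fin t)).Nonempty := ⟨i₀, Finset.mem_univ i₀⟩
    obtain ⟨j, -, hj⟩ := Finset.exists_max_image Finset.univ
      (fun i => ((M ∩ Vs i).card : ℝ) / r i) htne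
    have hri₀ : 0 < r i₀ := by
      rcases (hr0 i₀).eq_or_lt with h | h
      · exfalso; rw [hrz i₀ h.symm] at hi₀; exact absurd hi₀ (Finset.notMem_empty v₀)
      · exact h
    have hmi₀ : 0 < ((M ∩ Vs i₀).card : ℝ) := by
      have : v₀ ∈ M ∩ Vs i₀ := Finset.mem_inter.mpr ⟨hv₀, hi₀⟩
      exact_mod_cast Finset.card_pos.mpr ⟨v₀, this⟩
    have hjpos : 0 < ((M ∩ Vs j).card : ℝ) / r j :=
      lt_of_lt_of_le (div_pos hmi₀ hri₀) (hj i₀ (Finset.mem_univ i₀))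
    have hrj : 0 < r j := by
      rcases (hr0 j).eq_or_lt with h | h
      · rw [← h, div_zero] at hjpos; exact absurd hjpos (lt_irrefl 0)
      · exact h
    have hMj : (M ∩ Vs j).Nonempty := by
      rw [← Finset.card_pos]
      by_contra h
      rw [not_lt, Nat.le_zero] at h
      rw [h] at hjpos
      simp at hjpos
    -- |M| ≤ (β / r j) * m_j
    have hkey : (M.card : ℝ) ≤ (∑ k, r k) / r j * ((M ∩ Vs j).card : ℝ) := by
      have hsub : M ⊆ Finset.univ.biUnion fun i => M ∩ Vs i := by
        intro v hv
        obtain ⟨i, hi⟩ := hcover v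
        exact Finset.mem_biUnion.mpr ⟨i, Finset.mem_univ i, Finset.mem_inter.mpr ⟨hv, hi⟩⟩
      have h1 : (M.card : ℝ) ≤ ∑ i, ((M ∩ Vs i).card : ℝ) := by
        have := (Finset.card_le_card hsub).trans Finset.card_biUnion_le
        exact_mod_cast this
      have h2 : ∀ i, ((M ∩ Vs i).card : ℝ) ≤ ((M ∩ Vs j).card : ℝ) / r j * r i := by
        intro i
        rcases (hr0 i).eq_or_lt with h | h
        · rw [hrz i h.symm]
          simp only [Finset.inter_empty, Finset.card_empty, Nat.cast_zero]
          positivity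
        · calc ((M ∩ Vs i).card : ℝ) = ((M ∩ Vs i).card : ℝ) / r i * r i :=
              (div_mul_cancel₀ _ h.ne').symm
            _ ≤ ((M ∩ Vs j).card : ℝ) / r j * r i :=
              mul_le_mul_of_nonneg_right (hj i (Finset.mem_univ i)) h.le
      calc (M.card : ℝ) ≤ ∑ i, ((M ∩ Vs i).card : ℝ) := h1
        _ ≤ ∑ i, ((M ∩ Vs j).card : ℝ) / r j * r i := Finset.sum_le_sum fun i _ => h2 i
        _ = ((M ∩ Vs j).card : ℝ) / r j * ∑ k, r k := by rw [← Finset.mul_sum]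
        _ = (∑ k, r k) / r j * ((M ∩ Vs j).card : ℝ) := by ring
    -- Painter's step on part j
    obtain ⟨X, hXM, hXne, hXind, hXcost⟩ := painter_step G (S ∩ Vs j) (M ∩ Vs j)
      (Finset.inter_subset_inter hMS (Finset.Subset.refl _)) hMj
    have hXMfull : X ⊆ M := hXM.trans Finset.inter_subset_left
    have hXS : X ⊆ S := hXMfull.trans hMS
    have hXVj : X ⊆ Vs j := hXM.trans Finset.inter_subset_right
    have hcardSX : (S \ X).card ≤ m := by
      have := card_sdiff_lt (S := S) (X := X) hXS hXne
      omega
    -- bound the sInf by the value of the move X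
    have hinf : sInf {k : ℕ | ∃ X : Finset V, X ⊆ M ∧ X.Nonempty ∧
        (∀ x ∈ X, ∀ y ∈ X, ¬ G.Adj x y) ∧ k = slowAux G m (S \ X)}
        ≤ slowCost G (S \ X) := by
      apply Nat.sInf_le
      refine ⟨X, hXMfull, hXne, hXind, ?_⟩
      rw [slowAux_eq_slowCost G hcardSX]
    -- induction hypothesis on S \ X
    have hIH := ih (S \ X) (by omega)
    -- intersections of S \ X with the parts
    have hint : ∀ i, i ≠ j → (S \ X) ∩ Vs i = S ∩ Vs i := by
      intro i hij
      ext v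
      simp only [Finset.mem_inter, Finset.mem_sdiff]
      constructor
      · rintro ⟨⟨h1, _⟩, h2⟩; exact ⟨h1, h2⟩
      · rintro ⟨h1, h2⟩
        refine ⟨⟨h1, fun hvX => ?_⟩, h2⟩
        exact (Finset.disjoint_left.mp (hdisj j i (Ne.symm hij))) (hXVj hvX) h2
    have hintj : (S \ X) ∩ Vs j = (S ∩ Vs j) \ X := by
      ext v
      simp only [Finset.mem_inter, Finset.mem_sdiff]
      tauto
    -- assemble
    push_cast
    have hc1 : ((sInf {k : ℕ | ∃ X : Finset V, X ⊆ M ∧ X.Nonempty ∧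
        (∀ x ∈ X, ∀ y ∈ X, ¬ G.Adj x y) ∧ k = slowAux G m (S \ X)} : ℕ) : ℝ)
        ≤ (slowCost G (S \ X) : ℝ) := Nat.cast_le.mpr hinf
    have hfinal : (∑ k, r k) / r j * ((M ∩ Vs j).card : ℝ)
        + ∑ i, (∑ k, r k) / r i * (slowCost G ((S \ X) ∩ Vs i) : ℝ)
        ≤ ∑ i, (∑ k, r k) / r i * (slowCost G (S ∩ Vs i) : ℝ) := by
      have e1 := Finset.sum_erase_add Finset.univ
        (fun i => (∑ k, r k) / r i * (slowCost G ((S \ X) ∩ Vs i) : ℝ)) (Finset.mem_univ j)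
      have e2 := Finset.sum_erase_add Finset.univ
        (fun i => (∑ k, r k) / r i * (slowCost G (S ∩ Vs i) : ℝ)) (Finset.mem_univ j)
      have hterms : ∑ i ∈ Finset.univ.erase j,
          (∑ k, r k) / r i * (slowCost G ((S \ X) ∩ Vs i) : ℝ)
          = ∑ i ∈ Finset.univ.erase j, (∑ k, r k) / r i * (slowCost G (S ∩ Vs i) : ℝ) :=
        Finset.sum_congr rfl fun i hi => by rw [hint i (Finset.ne_of_mem_erase hi)]
      have hswap : slowCost G ((S \ X) ∩ Vs j) = slowCost G ((S ∩ Vs j) \ X) := by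
        rw [hintj]
      have hjj : (∑ k, r k) / r j * ((M ∩ Vs j).card : ℝ)
          + (∑ k, r k) / r j * (slowCost G ((S ∩ Vs j) \ X) : ℝ)
          ≤ (∑ k, r k) / r j * (slowCost G (S ∩ Vs j) : ℝ) := by
        rw [← mul_add]
        apply mul_le_mul_of_nonneg_left _ (div_nonneg hβ0 (hr0 j))
        exact_mod_cast hXcost
      rw [hswap] at e1
      linarith
    calc (M.card : ℝ) + ((sInf {k : ℕ | ∃ X : Finset V, X ⊆ M ∧ X.Nonempty ∧
          (∀ x ∈ X, ∀ y ∈ X, ¬ G.Adj x y) ∧ k = slowAux G m (S \ X)} : ℕ) : ℝ)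
        ≤ (∑ k, r k) / r j * ((M ∩ Vs j).card : ℝ) + (slowCost G (S \ X) : ℝ) :=
          add_le_add hkey hc1
      _ ≤ (∑ k, r k) / r j * ((M ∩ Vs j).card : ℝ)
          + ∑ i, (∑ k, r k) / r i * (slowCost G ((S \ X) ∩ Vs i) : ℝ) := by linarith [hIH]
      _ ≤ ∑ i, (∑ k, r k) / r i * (slowCost G (S ∩ Vs i) : ℝ) := hfinal

end Main
theorem stmt_0 {V : Type*} [Fintype V] [DecidableEq V] (G : SimpleGraph V)
    (t : ℕ) (Vs : Fin t → Finset V) (c : Fin t → ℝ)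
    (hdisj : ∀ i j, i ≠ j → Disjoint (Vs i) (Vs j))
    (hcover : ∀ v : V, ∃ i, v ∈ Vs i)
    (hc : ∀ i, 0 < c i)
    (hbound : ∀ i, (slowCost G (Vs i) : ℝ) ≤ c i * (Vs i).card) :
    (slowCost G Finset.univ : ℝ) ≤ (∑ i, Real.sqrt (c i * (Vs i).card)) ^ 2 := by
  set r : Fin t → ℝ := fun i => Real.sqrt (c i * ((Vs i).card : ℝ)) with hrdef
  have hr0 : ∀ i, 0 ≤ r i := fun i => Real.sqrt_nonneg _
  have hnn : ∀ i, (0:ℝ) ≤ c i * ((Vs i).card : ℝ) :=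
    fun i => mul_nonneg (hc i).le (Nat.cast_nonneg _)
  have hrsq : ∀ i, r i ^ 2 = c i * ((Vs i).card : ℝ) :=
    fun i => Real.sq_sqrt (hnn i)
  have hrz : ∀ i, r i = 0 → Vs i = ∅ := by
    intro i h
    have h1 : c i * ((Vs i).card : ℝ) = 0 := by
      have := hrsq i
      rw [h] at this
      simpa using this.symm
    rcases mul_eq_zero.mp h1 with h' | h'
    · exact absurd h' (hc i).ne'
    · exact Finset.card_eq_zero.mp (by exact_mod_cast h')
  have hmain := main_lemma G t Vs r hr0 hrz hdisj hcover
    (Finset.univ : Finset V).card Finset.univ le_rfl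
  simp only [Finset.univ_inter] at hmain
  have hterm : ∀ i, (∑ k, r k) / r i * (slowCost G (Vs i) : ℝ) ≤ (∑ k, r k) * r i := by
    intro i
    rcases (hr0 i).eq_or_lt with h | h
    · rw [← h]
      have : Vs i = ∅ := hrz i h.symm
      rw [this, slowCost_empty]
      simp
    · have h1 : (slowCost G (Vs i) : ℝ) ≤ r i ^ 2 := by rw [hrsq i]; exact hbound i
      calc (∑ k, r k) / r i * (slowCost G (Vs i) : ℝ)
          ≤ (∑ k, r k) / r i * (r i ^ 2) := by
            apply mul_le_mul_of_nonneg_left h1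
            exact div_nonneg (Finset.sum_nonneg fun k _ => hr0 k) (hr0 i)
        _ = (∑ k, r k) * r i := by field_simp
  calc (slowCost G (Finset.univ : Finset V) : ℝ)
      ≤ ∑ i, (∑ k, r k) / r i * (slowCost G (Vs i) : ℝ) := hmain
    _ ≤ ∑ i, (∑ k, r k) * r i := Finset.sum_le_sum fun i _ => hterm i
    _ = (∑ i, r i) ^ 2 := by rw [← Finset.mul_sum, sq]
end

section
/- Let G be an n-vertex complete k-partite graph with parts of sizes r_1, ..., r_k (that is, V(G) is partitioned into independent sets R_1, ..., R_k with |R_i| = r_i, and two vertices are adjacent if and only if they lie in different parts). Then the sum-color cost satisfies ŝ(G) ≤ n + 2·Σ_{1 ≤ i < j ≤ k} √(r_i·r_j). -/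
open Finset

lemma sq_sum_expand {ι : Type*} [LinearOrder ι] (s : Finset ι) (f : ι → ℝ) :
    (∑ i ∈ s, f i)^2 = ∑ i ∈ s, (f i)^2
      + 2 * ∑ i ∈ s, ∑ j ∈ s.filter (fun j => i < j), f i * f j := by
  classical
  induction s using Finset.induction_on with
  | empty => simp
  | @insert a s ha ih =>
    rw [sum_insert ha, sum_insert ha, sum_insert ha]
    have h0 : (insert a s).filter (fun j => a < j) = s.filter (fun j => a < j) := by
      rw [filter_insert]; simp
    have h1 : ∀ i ∈ s, ∑ j ∈ (insert a s).filter (fun j => i < j), f i * f j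
        = (if i < a then f i * f a else 0) + ∑ j ∈ s.filter (fun j => i < j), f i * f j := by
      intro i hi
      rw [filter_insert]
      split_ifs with h
      · rw [sum_insert (fun hc => ha (mem_filter.mp hc).1)]
      · simp
    rw [sum_congr rfl h1, sum_add_distrib, ← sum_filter, h0]
    have h3 : s.filter (fun i => i < a) = s.filter (fun j => ¬ a < j) := by
      apply filter_congr
      intro j hj
      simp only [not_lt, eq_iff_iff]
      exact ⟨le_of_lt, fun h => lt_of_le_of_ne h (fun he => ha (he ▸ hj))⟩
    have h2 : ∑ j ∈ s.filter (fun j => a < j), f a * f j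
        + ∑ i ∈ s.filter (fun i => i < a), f i * f a = f a * ∑ j ∈ s, f j := by
      calc ∑ j ∈ s.filter (fun j => a < j), f a * f j
          + ∑ i ∈ s.filter (fun i => i < a), f i * f a
          = ∑ j ∈ s.filter (fun j => a < j), f a * f j
          + ∑ j ∈ s.filter (fun j => ¬ a < j), f a * f j := by
            rw [h3]; exact congrArg _ (sum_congr rfl fun j _ => mul_comm _ _)
        _ = ∑ j ∈ s, f a * f j := sum_filter_add_sum_filter_not s _ _
        _ = f a * ∑ j ∈ s, f j := (mul_sum s f (f a)).symm
    linear_combination ih - 2 * h2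

lemma card_parts {V : Type*} [DecidableEq V] {k : ℕ} {R : Fin k → Finset V}
    (hdisj : ∀ i j, i ≠ j → Disjoint (R i) (R j))
    (hcover : ∀ v : V, ∃ i, v ∈ R i) (M : Finset V) :
    M.card = ∑ j, (M ∩ R j).card := by
  classical
  rw [← Finset.card_biUnion]
  · congr 1
    ext v
    simp only [Finset.mem_biUnion, Finset.mem_univ, true_and, Finset.mem_inter]
    constructor
    · intro hv
      obtain ⟨i, hi⟩ := hcover v
      exact ⟨i, hv, hi⟩
    · rintro ⟨i, hv, -⟩
      exact hv
  · intro i _ j _ hij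
    exact (hdisj i j hij).mono inter_subset_right inter_subset_right

lemma key_ineq {mj a b tj : ℝ} (hab : b ≤ a) (htj : 0 < tj) (ha : 0 < a)
    (h : mj * a ≤ (a^2 - b^2) * tj) :
    mj ≤ (a - b) * (tj + tj) := by
  nlinarith [sq_nonneg (a - b), mul_pos htj ha,
    mul_nonneg (mul_nonneg (sub_nonneg.mpr hab) (sub_nonneg.mpr hab)) htj.le]

lemma slowAux_le_potential {V : Type*} [Fintype V] [DecidableEq V] (G : SimpleGraph V)
    {k : ℕ} (R : Fin k → Finset V)
    (hdisj : ∀ i j, i ≠ j → Disjoint (R i) (R j))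
    (hcover : ∀ v : V, ∃ i, v ∈ R i)
    (hadj : ∀ i j (u : V), u ∈ R i → ∀ v ∈ R j, (G.Adj u v ↔ i ≠ j)) :
    ∀ n (S : Finset V), S.card ≤ n →
      (slowAux G n S : ℝ) ≤ (∑ j, Real.sqrt ((S ∩ R j).card))^2 := by
  intro n
  induction n with
  | zero =>
    intro S _
    simp only [slowAux, Nat.cast_zero]
    positivity
  | succ n ih =>
    intro S hS
    rw [slowAux]
    by_cases ht : (S.powerset.filter fun M => M.Nonempty).Nonempty
    · obtain ⟨M, hMt, hsup⟩ := Finset.exists_mem_eq_sup _ ht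
        (fun M => M.card + sInf {m : ℕ | ∃ X : Finset V, X ⊆ M ∧ X.Nonempty ∧
          (∀ x ∈ X, ∀ y ∈ X, ¬ G.Adj x y) ∧ m = slowAux G n (S \ X)})
      rw [hsup]
      obtain ⟨hMS, hMne⟩ : M ⊆ S ∧ M.Nonempty := by
        simpa [Finset.mem_filter, Finset.mem_powerset] using hMt
      obtain ⟨v, hv⟩ := hMne
      obtain ⟨i0, hi0⟩ := hcover v
      -- choose the part maximizing the ratio
      obtain ⟨i, -, hmax⟩ := Finset.exists_max_image Finset.univ
        (fun j => ((M ∩ R j).card : ℝ) / Real.sqrt ((S ∩ R j).card))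
        ⟨i0, Finset.mem_univ i0⟩
      simp only [Finset.mem_univ, forall_const] at hmax
      have hMRle : ∀ j, (M ∩ R j).card ≤ (S ∩ R j).card :=
        fun j => Finset.card_le_card (Finset.inter_subset_inter_right hMS)
      have hm0 : 0 < (M ∩ R i0).card := Finset.card_pos.mpr ⟨v, Finset.mem_inter.mpr ⟨hv, hi0⟩⟩
      have hfi0 : (0 : ℝ) < ((M ∩ R i0).card : ℝ) / Real.sqrt ((S ∩ R i0).card) := by
        apply div_pos (by exact_mod_cast hm0)
        exact Real.sqrt_pos.mpr (by exact_mod_cast lt_of_lt_of_le hm0 (hMRle i0))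
      have hfi : (0 : ℝ) < ((M ∩ R i).card : ℝ) / Real.sqrt ((S ∩ R i).card) :=
        lt_of_lt_of_le hfi0 (hmax i0)
      have hmi : 0 < (M ∩ R i).card := by
        by_contra h
        rw [Nat.le_zero.mp (not_lt.mp h)] at hfi
        norm_num at hfi
      have hsi : (0 : ℝ) < Real.sqrt ((S ∩ R i).card) :=
        Real.sqrt_pos.mpr (by exact_mod_cast lt_of_lt_of_le hmi (hMRle i))
      set X := M ∩ R i with hX
      have hXM : X ⊆ M := Finset.inter_subset_left
      have hXS : X ⊆ S := hXM.trans hMS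
      have hXRi : X ⊆ R i := Finset.inter_subset_right
      have hXne : X.Nonempty := Finset.card_pos.mp hmi
      have hind : ∀ x ∈ X, ∀ y ∈ X, ¬ G.Adj x y := by
        intro x hx y hy
        rw [hadj i i x (hXRi hx) y (hXRi hy)]
        simp
      have hcard' : (S \ X).card ≤ n := by
        rw [Finset.card_sdiff_of_subset hXS]
        have := Finset.card_pos.mpr hXne
        omega
      have hmem : slowAux G n (S \ X) ∈ {m : ℕ | ∃ Y : Finset V, Y ⊆ M ∧ Y.Nonempty ∧
          (∀ x ∈ Y, ∀ y ∈ Y, ¬ G.Adj x y) ∧ m = slowAux G n (S \ Y)} :=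
        ⟨X, hXM, hXne, hind, rfl⟩
      have h1 : (↑(M.card + sInf {m : ℕ | ∃ Y : Finset V, Y ⊆ M ∧ Y.Nonempty ∧
          (∀ x ∈ Y, ∀ y ∈ Y, ¬ G.Adj x y) ∧ m = slowAux G n (S \ Y)}) : ℝ)
          ≤ (M.card : ℝ) + (slowAux G n (S \ X) : ℝ) := by
        exact_mod_cast Nat.add_le_add_left (Nat.sInf_le hmem) M.card
      refine h1.trans ?_
      have h2 := ih (S \ X) hcard'
      -- equalities of parts after removal
      have hteq : ∀ j, j ≠ i → ((S \ X) ∩ R j) = S ∩ R j := by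
        intro j hji
        have hdisjX : Disjoint (R j) X := (hdisj j i hji).mono_right hXRi
        ext x
        simp only [Finset.mem_inter, Finset.mem_sdiff]
        constructor
        · rintro ⟨⟨hs, -⟩, hr⟩; exact ⟨hs, hr⟩
        · rintro ⟨hs, hr⟩; exact ⟨⟨hs, Finset.disjoint_left.mp hdisjX hr⟩, hr⟩
      have hXsub : X ⊆ S ∩ R i := Finset.subset_inter hXS hXRi
      have hti : (((S \ X) ∩ R i).card : ℝ)
          = ((S ∩ R i).card : ℝ) - ((M ∩ R i).card : ℝ) := by
        have hset : (S \ X) ∩ R i = (S ∩ R i) \ X := by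
          ext x
          simp only [Finset.mem_inter, Finset.mem_sdiff]
          tauto
        have hle := Finset.card_le_card hXsub
        rw [hset, Finset.card_sdiff_of_subset hXsub, Nat.cast_sub hle]
      have hb0 : (0:ℝ) ≤ Real.sqrt (((S \ X) ∩ R i).card) := Real.sqrt_nonneg _
      have hab : Real.sqrt (((S \ X) ∩ R i).card) ≤ Real.sqrt ((S ∩ R i).card) := by
        apply Real.sqrt_le_sqrt
        exact_mod_cast Finset.card_le_card (Finset.inter_subset_inter Finset.sdiff_subset subset_rfl)
      have ha2 : (Real.sqrt ((S ∩ R i).card))^2 = ((S ∩ R i).card : ℝ) :=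
        Real.sq_sqrt (by positivity)
      have hb2 : (Real.sqrt (((S \ X) ∩ R i).card))^2
          = ((S ∩ R i).card : ℝ) - ((M ∩ R i).card : ℝ) := by
        rw [Real.sq_sqrt (by positivity), hti]
      have hmi' : ((M ∩ R i).card : ℝ)
          = (Real.sqrt ((S ∩ R i).card))^2 - (Real.sqrt (((S \ X) ∩ R i).card))^2 := by
        rw [ha2, hb2]; ring
      -- pointwise bound
      have hpoint : ∀ j, ((M ∩ R j).card : ℝ) ≤
          (Real.sqrt ((S ∩ R i).card) - Real.sqrt (((S \ X) ∩ R i).card)) *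
          (Real.sqrt ((S ∩ R j).card) + Real.sqrt (((S \ X) ∩ R j).card)) := by
        intro j
        by_cases hji : j = i
        · subst hji
          rw [hmi']
          apply le_of_eq
          ring
        · rw [hteq j hji]
          by_cases hmj : (M ∩ R j).card = 0
          · rw [hmj]
            push_cast
            have h1 : (0:ℝ) ≤ Real.sqrt ((S ∩ R j).card) := Real.sqrt_nonneg _
            have h2 : (0:ℝ) ≤ Real.sqrt ((S ∩ R i).card) - Real.sqrt (((S \ X) ∩ R i).card) :=
              sub_nonneg.mpr hab
            nlinarith
          · have hmjpos : 0 < (M ∩ R j).card := Nat.pos_of_ne_zero hmj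
            have htj : (0:ℝ) < Real.sqrt ((S ∩ R j).card) :=
              Real.sqrt_pos.mpr (by exact_mod_cast lt_of_lt_of_le hmjpos (hMRle j))
            have hratio := hmax j
            rw [div_le_div_iff₀ htj hsi] at hratio
            rw [hmi'] at hratio
            exact key_ineq hab htj hsi hratio
      -- sum everything
      have hMcard : (M.card : ℝ) = ∑ j, ((M ∩ R j).card : ℝ) := by
        rw [card_parts hdisj hcover M]
        push_cast
        rfl
      have hsum : (M.card : ℝ) ≤
          (Real.sqrt ((S ∩ R i).card) - Real.sqrt (((S \ X) ∩ R i).card)) *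
          ((∑ j, Real.sqrt ((S ∩ R j).card)) + (∑ j, Real.sqrt (((S \ X) ∩ R j).card))) := by
        rw [hMcard]
        calc ∑ j, ((M ∩ R j).card : ℝ)
            ≤ ∑ j, (Real.sqrt ((S ∩ R i).card) - Real.sqrt (((S \ X) ∩ R i).card)) *
              (Real.sqrt ((S ∩ R j).card) + Real.sqrt (((S \ X) ∩ R j).card)) :=
              Finset.sum_le_sum (fun j _ => hpoint j)
          _ = _ := by rw [← Finset.mul_sum, Finset.sum_add_distrib]
      have hdiffsum : (∑ j, Real.sqrt ((S ∩ R j).card))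
          - (∑ j, Real.sqrt (((S \ X) ∩ R j).card))
          = Real.sqrt ((S ∩ R i).card) - Real.sqrt (((S \ X) ∩ R i).card) := by
        rw [← Finset.sum_sub_distrib]
        rw [Finset.sum_eq_single i]
        · intro j _ hji
          rw [hteq j hji]; ring
        · intro h; exact absurd (Finset.mem_univ i) h
      have hfinal : (M.card : ℝ) + (∑ j, Real.sqrt (((S \ X) ∩ R j).card))^2
          ≤ (∑ j, Real.sqrt ((S ∩ R j).card))^2 := by
        have hx : (Real.sqrt ((S ∩ R i).card) - Real.sqrt (((S \ X) ∩ R i).card)) *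
            ((∑ j, Real.sqrt ((S ∩ R j).card)) + (∑ j, Real.sqrt (((S \ X) ∩ R j).card)))
            = (∑ j, Real.sqrt ((S ∩ R j).card))^2
              - (∑ j, Real.sqrt (((S \ X) ∩ R j).card))^2 := by
          rw [← hdiffsum]; ring
        linarith [hsum]
      calc (M.card : ℝ) + (slowAux G n (S \ X) : ℝ)
          ≤ (M.card : ℝ) + (∑ j, Real.sqrt (((S \ X) ∩ R j).card))^2 := by linarith
        _ ≤ (∑ j, Real.sqrt ((S ∩ R j).card))^2 := hfinal
    · rw [Finset.not_nonempty_iff_eq_empty.mp ht]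
      simp only [Finset.sup_empty, bot_eq_zero', Nat.cast_zero]
      positivity

theorem stmt_2 {V : Type*} [Fintype V] [DecidableEq V] (G : SimpleGraph V)
    (k : ℕ) (R : Fin k → Finset V) (r : Fin k → ℕ)
    (hdisj : ∀ i j, i ≠ j → Disjoint (R i) (R j))
    (hcover : ∀ v : V, ∃ i, v ∈ R i)
    (hsize : ∀ i, (R i).card = r i)
    (hadj : ∀ i j (u : V), u ∈ R i → ∀ v ∈ R j, (G.Adj u v ↔ i ≠ j)) :
    (slowCost G Finset.univ : ℝ) ≤ (Fintype.card V : ℝ) +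
      2 * ∑ i : Fin k, ∑ j ∈ Finset.univ.filter (fun j => i < j),
        Real.sqrt ((r i : ℝ) * (r j : ℝ)) := by
  have hmain := slowAux_le_potential G R hdisj hcover hadj
    (Finset.univ.card) Finset.univ le_rfl
  have huniv : ∀ j, (Finset.univ ∩ R j) = R j := fun j => Finset.univ_inter (R j)
  have heq : (∑ j, Real.sqrt (((Finset.univ ∩ R j).card : ℝ)))
      = ∑ j, Real.sqrt (r j : ℝ) := by
    apply Finset.sum_congr rfl
    intro j _
    rw [huniv j, hsize j]
  rw [heq] at hmain
  have hexp := sq_sum_expand Finset.univ (fun j : Fin k => Real.sqrt (r j : ℝ))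
  have hsq : ∀ j : Fin k, (Real.sqrt (r j : ℝ))^2 = (r j : ℝ) :=
    fun j => Real.sq_sqrt (by positivity)
  have hcardV : (Fintype.card V : ℝ) = ∑ j, (r j : ℝ) := by
    have hc := card_parts hdisj hcover (Finset.univ : Finset V)
    rw [Finset.card_univ] at hc
    rw [hc]
    push_cast
    apply Finset.sum_congr rfl
    intro j _
    rw [huniv j, hsize j]
  have hsqrtmul : ∀ i j : Fin k, Real.sqrt ((r i : ℝ) * (r j : ℝ))
      = Real.sqrt (r i : ℝ) * Real.sqrt (r j : ℝ) :=
    fun i j => Real.sqrt_mul (by positivity) _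
  calc (slowCost G Finset.univ : ℝ)
      = (slowAux G Finset.univ.card (Finset.univ : Finset V) : ℝ) := rfl
    _ ≤ (∑ j, Real.sqrt (r j : ℝ))^2 := hmain
    _ = (Fintype.card V : ℝ) +
        2 * ∑ i : Fin k, ∑ j ∈ Finset.univ.filter (fun j => i < j),
          Real.sqrt ((r i : ℝ) * (r j : ℝ)) := by
        rw [hexp, hcardV]
        congr 1
        · exact Finset.sum_congr rfl (fun j _ => hsq j)
        · congr 1
          apply Finset.sum_congr rfl
          intro i _
          apply Finset.sum_congr rfl
          intro j _
          rw [hsqrtmul i j]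
end

section
/- Let G be a k-degenerate finite simple graph, and let k_1, ..., k_t be nonnegative integers with Σ_{i=1}^{t} (k_i + 1) ≥ k + 1. Then the vertex set of G can be partitioned into sets V_1, ..., V_t such that the induced subgraph G[V_i] is k_i-degenerate for each i. -/
open Finset

/-- A graph is `k`-degenerate if every nonempty (finite) subgraph has a
vertex of degree at most `k`, equivalently every nonempty finite set `A` of
vertices contains a vertex with at most `k` neighbors inside `A`. -/
def Degenerate {W : Type*} (G : SimpleGraph W) (k : ℕ) : Prop :=
  ∀ A : Finset W, A.Nonempty → ∃ v ∈ A, ({u : W | u ∈ A ∧ G.Adj v u}).ncard ≤ k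

lemma aux_partition {V : Type*} [DecidableEq V] (G : SimpleGraph V) [DecidableRel G.Adj]
    (k t : ℕ) (ks : Fin t → ℕ) (hsum : k + 1 ≤ ∑ i, (ks i + 1))
    (hdeg : ∀ A : Finset V, A.Nonempty → ∃ v ∈ A, (A.filter (G.Adj v)).card ≤ k) :
    ∀ (n : ℕ) (A : Finset V), A.card = n →
    ∃ (Vs : Fin t → Finset V) (f : V → ℕ),
      (∀ i j, i ≠ j → Disjoint (Vs i) (Vs j)) ∧
      (∀ i, Vs i ⊆ A) ∧
      (∀ v ∈ A, ∃ i, v ∈ Vs i) ∧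
      (∀ u ∈ A, ∀ v ∈ A, f u = f v → u = v) ∧
      (∀ i, ∀ v ∈ Vs i, ((Vs i).filter (fun u => G.Adj v u ∧ f u < f v)).card ≤ ks i) := by
  intro n
  induction n using Nat.strong_induction_on with
  | _ n ih =>
    intro A hcard
    rcases A.eq_empty_or_nonempty with rfl | hA
    · exact ⟨fun _ => ∅, fun _ => 0, by simp, by simp, by simp, by simp, by simp⟩
    obtain ⟨v, hvA, hvk⟩ := hdeg A hA
    have hcard' : (A.erase v).card < n := by
      rw [← hcard]; exact Finset.card_erase_lt_of_mem hvA
    obtain ⟨Vs, f, hdisj, hsub, hcov, hinj, hcnt⟩ := ih _ hcard' (A.erase v) rfl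
    have hvnot : ∀ i, v ∉ Vs i := fun i h => (Finset.notMem_erase v A) (hsub i h)
    -- choose a color for v
    have hcol : ∃ i₀, ((Vs i₀).filter (G.Adj v)).card ≤ ks i₀ := by
      by_contra h
      push_neg at h
      have hle : ∑ i, (ks i + 1) ≤ ∑ i, ((Vs i).filter (G.Adj v)).card :=
        Finset.sum_le_sum fun i _ => h i
      have hbi : ∑ i : Fin t, ((Vs i).filter (G.Adj v)).card
          = (Finset.univ.biUnion (fun i => (Vs i).filter (G.Adj v))).card := by
        refine (Finset.card_biUnion ?_).symm
        intro x _ y _ hxy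
        exact (hdisj x y hxy).mono (Finset.filter_subset _ _) (Finset.filter_subset _ _)
      have hsubN : Finset.univ.biUnion (fun i => (Vs i).filter (G.Adj v)) ⊆
          A.filter (G.Adj v) := by
        intro u hu
        simp only [Finset.mem_biUnion, Finset.mem_filter] at hu ⊢
        obtain ⟨i, _, hu1, hu2⟩ := hu
        exact ⟨Finset.mem_of_mem_erase (hsub i hu1), hu2⟩
      have := Finset.card_le_card hsubN
      omega
    obtain ⟨i₀, hi₀⟩ := hcol
    set m := (A.erase v).sup f + 1 with hm
    have hfm : ∀ u ∈ A.erase v, f u < m := fun u hu => Nat.lt_succ_of_le (Finset.le_sup hu)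
    refine ⟨Function.update Vs i₀ (insert v (Vs i₀)), Function.update f v m, ?_, ?_, ?_, ?_, ?_⟩
    · intro i j hij
      by_cases hi : i = i₀ <;> by_cases hj : j = i₀
      · exact absurd (hi.trans hj.symm) hij
      · subst hi
        simp only [Function.update_self, Function.update_of_ne hj]
        exact Finset.disjoint_insert_left.mpr ⟨hvnot j, hdisj _ _ hij⟩
      · subst hj
        simp only [Function.update_self, Function.update_of_ne hi]
        exact Finset.disjoint_insert_right.mpr ⟨hvnot i, hdisj _ _ hij⟩
      · rw [Function.update_of_ne hi, Function.update_of_ne hj]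
        exact hdisj _ _ hij
    · intro i
      by_cases hi : i = i₀
      · subst hi
        simp only [Function.update_self]
        exact Finset.insert_subset hvA ((hsub i).trans (Finset.erase_subset _ _))
      · rw [Function.update_of_ne hi]
        exact (hsub i).trans (Finset.erase_subset _ _)
    · intro u hu
      by_cases huv : u = v
      · exact ⟨i₀, by simp [huv]⟩
      · obtain ⟨i, hi⟩ := hcov u (Finset.mem_erase.mpr ⟨huv, hu⟩)
        refine ⟨i, ?_⟩
        by_cases h : i = i₀
        · subst h; simp only [Function.update_self]; exact Finset.mem_insert_of_mem hi
        · rwa [Function.update_of_ne h]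
    · intro u hu w hw heq
      by_cases hu' : u = v <;> by_cases hw' : w = v
      · exact hu'.trans hw'.symm
      · rw [hu', Function.update_self, Function.update_of_ne hw'] at heq
        exact absurd heq.symm (Nat.ne_of_lt (hfm w (Finset.mem_erase.mpr ⟨hw', hw⟩)))
      · rw [hw', Function.update_self, Function.update_of_ne hu'] at heq
        exact absurd heq (Nat.ne_of_lt (hfm u (Finset.mem_erase.mpr ⟨hu', hu⟩)))
      · rw [Function.update_of_ne hu', Function.update_of_ne hw'] at heq
        exact hinj u (Finset.mem_erase.mpr ⟨hu', hu⟩) w (Finset.mem_erase.mpr ⟨hw', hw⟩) heq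
    · intro i x hx
      by_cases hxv : x = v
      · subst hxv
        have hii : i = i₀ := by
          by_contra h
          rw [Function.update_of_ne h] at hx
          exact hvnot i hx
        subst hii
        simp only [Function.update_self] at hx ⊢
        refine le_trans (Finset.card_le_card ?_) hi₀
        intro u hu
        simp only [Finset.mem_filter, Finset.mem_insert] at hu ⊢
        obtain ⟨h1, h2, _⟩ := hu
        have : u ≠ x := fun h => G.irrefl (h ▸ h2)
        exact ⟨h1.resolve_left this, h2⟩
      · have hx' : x ∈ Vs i := by
          by_cases h : i = i₀
          · subst h
            simp only [Function.update_self] at hx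
            exact (Finset.mem_insert.mp hx).resolve_left hxv
          · rwa [Function.update_of_ne h] at hx
        have hfx : Function.update f v m x = f x := Function.update_of_ne hxv _ _
        have hVsi : Function.update Vs i₀ (insert v (Vs i₀)) i ⊆ insert v (Vs i) := by
          by_cases h : i = i₀
          · subst h; simp only [Function.update_self]; exact subset_rfl
          · rw [Function.update_of_ne h]; exact Finset.subset_insert _ _
        refine le_trans (Finset.card_le_card ?_) (hcnt i x hx')
        intro u hu
        simp only [Finset.mem_filter] at hu ⊢
        obtain ⟨hu1, hu2, hu3⟩ := hu
        have huv : u ≠ v := by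
          rintro rfl
          rw [Function.update_self, hfx] at hu3
          exact absurd hu3 (not_lt.mpr (le_of_lt (hfm x (Finset.mem_erase.mpr ⟨hxv, Finset.mem_of_mem_erase (hsub i hx')⟩))))
        have hu1' : u ∈ Vs i := ((Finset.mem_insert.mp (hVsi hu1)).resolve_left huv)
        rw [Function.update_of_ne huv, hfx] at hu3
        exact ⟨hu1', hu2, hu3⟩

theorem stmt_5 {V : Type*} [Fintype V] [DecidableEq V] (G : SimpleGraph V)
    (k : ℕ) (hdeg : Degenerate G k)
    (t : ℕ) (ks : Fin t → ℕ) (hsum : k + 1 ≤ ∑ i, (ks i + 1)) :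
    ∃ Vs : Fin t → Finset V,
      (∀ i j, i ≠ j → Disjoint (Vs i) (Vs j)) ∧
      (∀ v : V, ∃ i, v ∈ Vs i) ∧
      (∀ i, Degenerate (G.induce (↑(Vs i) : Set V)) (ks i)) := by
  classical
  have hdeg' : ∀ A : Finset V, A.Nonempty → ∃ v ∈ A, (A.filter (G.Adj v)).card ≤ k := by
    intro A hA
    obtain ⟨v, hv, hnc⟩ := hdeg A hA
    refine ⟨v, hv, ?_⟩
    have hset : {u : V | u ∈ A ∧ G.Adj v u} = ↑(A.filter (G.Adj v)) := by
      ext u; simp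
    rwa [hset, Set.ncard_coe_finset] at hnc
  obtain ⟨Vs, f, hdisj, hsub, hcov, hinj, hcnt⟩ :=
    aux_partition G k t ks hsum hdeg' (Finset.univ.card) Finset.univ rfl
  refine ⟨Vs, hdisj, fun v => hcov v (Finset.mem_univ v), fun i => ?_⟩
  intro B hB
  obtain ⟨x, hxB, hmax⟩ := B.exists_max_image (fun u => f ↑u) hB
  refine ⟨x, hxB, ?_⟩
  have hsubset : Subtype.val '' {u : ↑(↑(Vs i) : Set V) | u ∈ B ∧ (G.induce (↑(Vs i) : Set V)).Adj x u}
      ⊆ ↑((Vs i).filter (fun u => G.Adj ↑x u ∧ f u < f ↑x)) := by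
    rintro w ⟨u, ⟨huB, hadj⟩, rfl⟩
    have hadj' : G.Adj ↑x ↑u := by
      simpa using hadj
    simp only [Finset.coe_filter, Set.mem_setOf_eq]
    refine ⟨Finset.mem_coe.mp u.2, hadj', ?_⟩
    have hle := hmax u huB
    have hne : (↑u : V) ≠ ↑x := fun h => (G.ne_of_adj hadj') h.symm
    exact lt_of_le_of_ne hle (fun h => hne (hinj _ (Finset.mem_univ _) _ (Finset.mem_univ _) h))
  have h1 : ({u : ↑(↑(Vs i) : Set V) | u ∈ B ∧ (G.induce (↑(Vs i) : Set V)).Adj x u}).ncard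
      = (Subtype.val '' {u : ↑(↑(Vs i) : Set V) | u ∈ B ∧ (G.induce (↑(Vs i) : Set V)).Adj x u}).ncard :=
    (Set.ncard_image_of_injective _ Subtype.val_injective).symm
  have h2 := Set.ncard_le_ncard hsubset (Finset.finite_toSet _)
  rw [Set.ncard_coe_finset] at h2
  exact le_trans (h1 ▸ h2) (hcnt i ↑x (Finset.mem_coe.mp x.2))
end

section
/- If G is a 4-colorable finite simple graph with n vertices and m edges (that is, the chromatic number of G is at most 4), then the sum-color cost satisfies ŝ(G) ≤ (8n + 3m)/5. -/
open Finset

/-! ### Auxiliary development -/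

section Slow

variable {V : Type*} [DecidableEq V]

/-- Degree of `v` inside the set `S`. -/
def degIn (G : SimpleGraph V) [DecidableRel G.Adj] (S : Finset V) (v : V) : ℕ :=
  (S.filter fun w => G.Adj v w).card

/-- Per-vertex weight. -/
def HH (d : ℕ) : ℕ := min (10 + 5 * d) (16 + 3 * d)

/-- Potential function. -/
def W2 (G : SimpleGraph V) [DecidableRel G.Adj] (S : Finset V) : ℕ :=
  ∑ v ∈ S, HH (degIn G S v)

lemma HH_slope {d e : ℕ} : HH d + 3 * e ≤ HH (d + e) := by
  unfold HH; omega

lemma HH_lowslope {d e : ℕ} (h : d + e ≤ 3) (he : 1 ≤ e) :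
    HH d + 3 * e + 2 ≤ HH (d + e) := by
  unfold HH; omega

lemma HH_le (d : ℕ) : HH d ≤ 16 + 3 * d := min_le_right _ _

variable (G : SimpleGraph V) [DecidableRel G.Adj]

lemma degIn_split {S X : Finset V} (hXS : X ⊆ S) (v : V) :
    degIn G S v = degIn G (S \ X) v + (X.filter fun x => G.Adj v x).card := by
  unfold degIn
  have h1 : ((S \ X).filter fun w => G.Adj v w) ∪ (X.filter fun w => G.Adj v w)
      = S.filter fun w => G.Adj v w := by
    rw [← filter_union, sdiff_union_of_subset hXS]
  have h2 : Disjoint ((S \ X).filter fun w => G.Adj v w)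
      (X.filter fun w => G.Adj v w) := disjoint_filter_filter sdiff_disjoint
  rw [← h1, card_union_of_disjoint h2]

lemma sum_eX {S X : Finset V} (hXS : X ⊆ S)
    (hind : ∀ x ∈ X, ∀ y ∈ X, ¬ G.Adj x y) :
    ∑ v ∈ S \ X, (X.filter fun x => G.Adj v x).card = ∑ x ∈ X, degIn G S x := by
  have hl : ∀ v, (X.filter fun x => G.Adj v x).card
      = ∑ x ∈ X, if G.Adj v x then 1 else 0 := fun v => card_filter _ _
  have hr : ∀ x ∈ X, degIn G S x = ∑ v ∈ S \ X, if G.Adj v x then 1 else 0 := by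
    intro x hx
    have h0 : degIn G S x = degIn G (S \ X) x + (X.filter fun y => G.Adj x y).card :=
      degIn_split G hXS x
    have h1 : (X.filter fun y => G.Adj x y) = ∅ := by
      apply filter_eq_empty_iff.mpr
      intro y hy
      exact hind x hx y hy
    rw [h1, card_empty, add_zero] at h0
    rw [h0]
    unfold degIn
    rw [card_filter]
    apply Finset.sum_congr rfl
    intro v _
    by_cases h : G.Adj x v
    · rw [if_pos h, if_pos (G.adj_symm h)]
    · rw [if_neg h, if_neg fun hh => h (G.adj_symm hh)]
  calc ∑ v ∈ S \ X, (X.filter fun x => G.Adj v x).card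
      = ∑ v ∈ S \ X, ∑ x ∈ X, if G.Adj v x then 1 else 0 := by
        exact Finset.sum_congr rfl fun v _ => hl v
    _ = ∑ x ∈ X, ∑ v ∈ S \ X, if G.Adj v x then 1 else 0 := Finset.sum_comm
    _ = ∑ x ∈ X, degIn G S x := Finset.sum_congr rfl fun x hx => (hr x hx).symm

/-- The one-round potential decrease estimate. -/
lemma D1 {S M X : Finset V} (hMS : M ⊆ S) (hXM : X ⊆ M)
    (hind : ∀ x ∈ X, ∀ y ∈ X, ¬ G.Adj x y)
    (hcov : ∀ u ∈ M, u ∉ X → ∃ x ∈ X, G.Adj u x) :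
    W2 G (S \ X) + (∑ x ∈ X, (HH (degIn G S x) + 3 * degIn G S x))
      + (∑ u ∈ M \ X, if degIn G S u ≤ 3 then 2 else 0) ≤ W2 G S := by
  classical
  have hXS : X ⊆ S := hXM.trans hMS
  set bon : V → ℕ := fun v => if v ∈ M ∧ degIn G S v ≤ 3 then 2 else 0 with hbon
  -- pointwise estimate on S \ X
  have hpt : ∀ v ∈ S \ X,
      HH (degIn G (S \ X) v) + 3 * (X.filter fun x => G.Adj v x).card + bon v
        ≤ HH (degIn G S v) := by
    intro v hv
    have hsplit := degIn_split G hXS v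
    by_cases hb : v ∈ M ∧ degIn G S v ≤ 3
    · have hvX : v ∉ X := (mem_sdiff.mp hv).2
      obtain ⟨x, hx, hadj⟩ := hcov v hb.1 hvX
      have he : 1 ≤ (X.filter fun x => G.Adj v x).card := by
        apply card_pos.mpr
        exact ⟨x, mem_filter.mpr ⟨hx, hadj⟩⟩
      have := HH_lowslope (d := degIn G (S \ X) v)
        (e := (X.filter fun x => G.Adj v x).card) (by omega) he
      simp only [hbon, if_pos hb]
      rw [hsplit]
      omega
    · have := HH_slope (d := degIn G (S \ X) v)
        (e := (X.filter fun x => G.Adj v x).card)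
      simp only [hbon, if_neg hb]
      rw [hsplit]
      omega
  have hsum : ∑ v ∈ S \ X, (HH (degIn G (S \ X) v)
        + 3 * (X.filter fun x => G.Adj v x).card + bon v)
      ≤ ∑ v ∈ S \ X, HH (degIn G S v) := Finset.sum_le_sum hpt
  rw [Finset.sum_add_distrib, Finset.sum_add_distrib, ← Finset.mul_sum,
    sum_eX G hXS hind] at hsum
  -- bonus sum comparison
  have hbonsum : (∑ u ∈ M \ X, if degIn G S u ≤ 3 then 2 else 0)
      ≤ ∑ v ∈ S \ X, bon v := by
    have h1 : (∑ u ∈ M \ X, if degIn G S u ≤ 3 then 2 else 0)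
        = ∑ u ∈ M \ X, bon u := by
      apply Finset.sum_congr rfl
      intro u hu
      have huM : u ∈ M := (mem_sdiff.mp hu).1
      simp only [hbon]
      by_cases h : degIn G S u ≤ 3
      · rw [if_pos h, if_pos ⟨huM, h⟩]
      · rw [if_neg h, if_neg fun hh => h hh.2]
    rw [h1]
    apply Finset.sum_le_sum_of_subset
    exact sdiff_subset_sdiff hMS Subset.rfl
  have hsplitW : ∑ v ∈ S \ X, HH (degIn G S v) + ∑ x ∈ X, HH (degIn G S x)
      = W2 G S := sum_sdiff hXS
  have hXsum : ∑ x ∈ X, (HH (degIn G S x) + 3 * degIn G S x)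
      = ∑ x ∈ X, HH (degIn G S x) + 3 * ∑ x ∈ X, degIn G S x := by
    rw [Finset.sum_add_distrib, Finset.mul_sum]
  have hW2 : W2 G (S \ X) = ∑ v ∈ S \ X, HH (degIn G (S \ X) v) := rfl
  omega

end Slow
section Greedy

variable {V : Type*} [DecidableEq V]
variable (G : SimpleGraph V) [DecidableRel G.Adj] (c : V → Fin 4) (M : Finset V)

/-- Greedy maximal independent set construction: process color classes in the
order given by the list, adding all still-unblocked vertices of that color. -/
def greedy : List (Fin 4) → Finset V → Finset V
  | [], X => X
  | i :: rest, X =>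
      greedy rest (X ∪ M.filter fun u => c u = i ∧ ∀ x ∈ X, ¬ G.Adj u x)

lemma greedy_mono : ∀ (l : List (Fin 4)) (X : Finset V), X ⊆ greedy G c M l X := by
  intro l
  induction l with
  | nil => intro X; exact Subset.rfl
  | cons i rest ih =>
      intro X
      exact subset_union_left.trans (ih _)

lemma greedy_subset : ∀ (l : List (Fin 4)) (X : Finset V),
    greedy G c M l X ⊆ X ∪ M := by
  intro l
  induction l with
  | nil => intro X; exact subset_union_left
  | cons i rest ih =>
      intro X
      refine (ih _).trans ?_
      apply union_subset
      · apply union_subset subset_union_left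
        exact (filter_subset _ _).trans subset_union_right
      · exact subset_union_right

lemma greedy_indep (hc : ∀ u v, G.Adj u v → c u ≠ c v) :
    ∀ (l : List (Fin 4)) (X : Finset V),
      (∀ x ∈ X, ∀ y ∈ X, ¬ G.Adj x y) →
      ∀ x ∈ greedy G c M l X, ∀ y ∈ greedy G c M l X, ¬ G.Adj x y := by
  intro l
  induction l with
  | nil => intro X hX; exact hX
  | cons i rest ih =>
      intro X hX
      apply ih
      intro x hx y hy
      rcases mem_union.mp hx with hx1 | hx2 <;> rcases mem_union.mp hy with hy1 | hy2
      · exact hX x hx1 y hy1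
      · have hy' := (mem_filter.mp hy2).2.2
        intro h
        exact hy' x hx1 (G.adj_symm h)
      · exact (mem_filter.mp hx2).2.2 y hy1
      · have hcx := (mem_filter.mp hx2).2.1
        have hcy := (mem_filter.mp hy2).2.1
        intro h
        exact hc x y h (hcx.trans hcy.symm)

lemma greedy_cover : ∀ (l : List (Fin 4)) (X : Finset V) (u : V),
    u ∈ M → c u ∈ l →
    u ∈ greedy G c M l X ∨ ∃ x ∈ greedy G c M l X, G.Adj u x := by
  intro l
  induction l with
  | nil => intro X u _ h; exact absurd h List.not_mem_nil
  | cons i rest ih =>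
      intro X u huM hmem
      by_cases hcu : c u = i
      · by_cases hblock : ∀ x ∈ X, ¬ G.Adj u x
        · left
          exact greedy_mono G c M rest _
            (mem_union_right _ (mem_filter.mpr ⟨huM, ⟨hcu, hblock⟩⟩))
        · right
          push_neg at hblock
          obtain ⟨x, hx, hadj⟩ := hblock
          exact ⟨x, greedy_mono G c M rest _ (mem_union_left _ hx), hadj⟩
      · have : c u ∈ rest := by
          rcases List.mem_cons.mp hmem with h | h
          · exact absurd h hcu
          · exact h
        exact ih _ u huM this

lemma greedy_of_first : ∀ (l : List (Fin 4)) (X : Finset V) (u : V),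
    u ∈ M → (∀ x ∈ X, ¬ G.Adj u x) → c u ∈ l →
    (∀ v ∈ M, G.Adj u v → List.idxOf (c u) l < List.idxOf (c v) l) →
    u ∈ greedy G c M l X := by
  intro l
  induction l with
  | nil => intro X u _ _ h; exact absurd h List.not_mem_nil
  | cons i rest ih =>
      intro X u huM hblock hmem hidx
      by_cases hcu : c u = i
      · exact greedy_mono G c M rest _
          (mem_union_right _ (mem_filter.mpr ⟨huM, ⟨hcu, hblock⟩⟩))
      · have hcur : c u ∈ rest := by
          rcases List.mem_cons.mp hmem with h | h
          · exact absurd h hcu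
          · exact h
        apply ih
        · exact huM
        · intro x hx
          rcases mem_union.mp hx with hx1 | hx2
          · exact hblock x hx1
          · intro hadj
            have hxM := (mem_filter.mp hx2).1
            have hcx := (mem_filter.mp hx2).2.1
            have h0 := hidx x hxM hadj
            rw [hcx, List.idxOf_cons_self] at h0
            exact absurd h0 (Nat.not_lt_zero _)
        · exact hcur
        · intro v hv hadj
          have h0 := hidx v hv hadj
          have hcv : c v ≠ i := by
            intro h
            rw [h, List.idxOf_cons_self] at h0
            exact absurd h0 (Nat.not_lt_zero _)
          rw [List.idxOf_cons_ne rest (fun h => hcu h.symm),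
            List.idxOf_cons_ne rest (fun h => hcv h.symm)] at h0
          omega

end Greedy
section Perms

/-- The 24 orderings of the four color classes. -/
def perms24 : List (List (Fin 4)) :=
  [[0,1,2,3], [0,1,3,2], [0,2,1,3], [0,2,3,1], [0,3,1,2], [0,3,2,1],
   [1,0,2,3], [1,0,3,2], [1,2,0,3], [1,2,3,0], [1,3,0,2], [1,3,2,0],
   [2,0,1,3], [2,0,3,1], [2,1,0,3], [2,1,3,0], [2,3,0,1], [2,3,1,0],
   [3,0,1,2], [3,0,2,1], [3,1,0,2], [3,1,2,0], [3,2,0,1], [3,2,1,0]]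

lemma perms24_length : perms24.length = 24 := rfl

lemma perms24_full : ∀ l ∈ perms24, ∀ b : Fin 4, b ∈ l := by decide

lemma count_perms : ∀ (a : Fin 4) (D : Finset (Fin 4)), a ∉ D →
    24 ≤ (D.card + 1) *
      (perms24.countP fun l => decide (∀ b ∈ D, List.idxOf a l < List.idxOf b l)) := by
  decide

end Perms

section ListHelpers

lemma list_sum_swap {α β : Type*} [DecidableEq β] (L : List α) (s : Finset β)
    (f : α → β → ℕ) :
    (L.map fun l => ∑ u ∈ s, f l u).sum = ∑ u ∈ s, (L.map fun l => f l u).sum := by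
  induction L with
  | nil => simp
  | cons a L ih => simp [ih, Finset.sum_add_distrib]

lemma list_sum_ite {α : Type*} (L : List α) (p : α → Prop) [DecidablePred p]
    (A B : ℕ) :
    (L.map fun a => if p a then A else B).sum
      = (L.countP fun a => decide (p a)) * A
        + (L.length - L.countP fun a => decide (p a)) * B := by
  induction L with
  | nil => simp
  | cons a L ih =>
      have hle : (L.countP fun a => decide (p a)) ≤ L.length := List.countP_le_length
      by_cases h : p a
      · simp only [List.map_cons, List.sum_cons, ih, List.countP_cons, List.length_cons,
          decide_eq_true h, if_pos h, if_true]
        have e1 : L.length + 1 - ((L.countP fun a => decide (p a)) + 1)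
            = L.length - (L.countP fun a => decide (p a)) := by omega
        rw [e1, add_mul, one_mul]
        omega
      · simp only [List.map_cons, List.sum_cons, ih, List.countP_cons, List.length_cons,
          decide_eq_false h, if_neg h, Bool.false_eq_true, if_false, add_zero]
        have e1 : L.length + 1 - (L.countP fun a => decide (p a))
            = (L.length - (L.countP fun a => decide (p a))) + 1 := by omega
        rw [e1, add_mul, one_mul]
        omega

lemma list_countP_mono {α : Type*} (L : List α) (p q : α → Bool)
    (h : ∀ a ∈ L, p a = true → q a = true) : L.countP p ≤ L.countP q := by
  induction L with
  | nil => simp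
  | cons a L ih =>
      have ih' := ih fun a ha => h a (List.mem_cons_of_mem _ ha)
      rw [List.countP_cons, List.countP_cons]
      by_cases hpa : p a = true
      · rw [h a (List.mem_cons_self) hpa, hpa]
        omega
      · simp only [Bool.not_eq_true] at hpa
        rw [hpa]
        simp only [Bool.false_eq_true, if_false]
        split <;> omega

end ListHelpers
section Key

variable {V : Type*} [DecidableEq V]

lemma key_lemma (G : SimpleGraph V) [DecidableRel G.Adj] (hcol : G.Colorable 4)
    {S M : Finset V} (hMS : M ⊆ S) (hM : M.Nonempty) :
    ∃ X : Finset V, X ⊆ M ∧ X.Nonempty ∧ (∀ x ∈ X, ∀ y ∈ X, ¬ G.Adj x y) ∧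
      10 * M.card + W2 G (S \ X) ≤ W2 G S := by
  classical
  obtain ⟨co⟩ := hcol
  set c : V → Fin 4 := fun v => co v with hcdef
  have hc : ∀ u v, G.Adj u v → c u ≠ c v := fun u v h => co.valid h
  set Xl : List (Fin 4) → Finset V := fun l => greedy G c M l ∅ with hXl
  have hXlM : ∀ l, Xl l ⊆ M := by
    intro l
    have := greedy_subset G c M l ∅
    rwa [empty_union] at this
  have hXlind : ∀ l, ∀ x ∈ Xl l, ∀ y ∈ Xl l, ¬ G.Adj x y := by
    intro l
    exact greedy_indep G c M hc l ∅ (by simp)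
  have hXlcov : ∀ l ∈ perms24, ∀ u ∈ M, u ∉ Xl l → ∃ x ∈ Xl l, G.Adj u x := by
    intro l hl u hu hnot
    rcases greedy_cover G c M l ∅ u hu (perms24_full l hl (c u)) with h | h
    · exact absurd h hnot
    · exact h
  set contrib : V → List (Fin 4) → ℕ := fun u l =>
    if u ∈ Xl l then (HH (degIn G S u) + 3 * degIn G S u)
    else (if degIn G S u ≤ 3 then 2 else 0) with hcontrib
  -- per-round bound via D1
  have hround : ∀ l ∈ perms24, ∑ u ∈ M, contrib u l + W2 G (S \ Xl l) ≤ W2 G S := by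
    intro l hl
    have hsplit : ∑ u ∈ M \ Xl l, contrib u l + ∑ u ∈ Xl l, contrib u l
        = ∑ u ∈ M, contrib u l := sum_sdiff (hXlM l)
    have h1 : ∑ u ∈ Xl l, contrib u l
        = ∑ x ∈ Xl l, (HH (degIn G S x) + 3 * degIn G S x) := by
      apply Finset.sum_congr rfl
      intro x hx
      simp only [hcontrib, if_pos hx]
    have h2 : ∑ u ∈ M \ Xl l, contrib u l
        = ∑ u ∈ M \ Xl l, if degIn G S u ≤ 3 then 2 else 0 := by
      apply Finset.sum_congr rfl
      intro u hu
      simp only [hcontrib, if_neg (mem_sdiff.mp hu).2]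
    have hd1 := D1 G hMS (hXlM l) (hXlind l) (hXlcov l hl)
    omega
  -- per-vertex averaged bound
  have hvert : ∀ u ∈ M, 240 ≤ (perms24.map fun l => contrib u l).sum := by
    intro u hu
    set d : ℕ := degIn G S u with hd
    set D : Finset (Fin 4) := (M.filter fun v => G.Adj u v).image c with hD
    have haD : c u ∉ D := by
      intro hmem
      obtain ⟨v, hv, hcv⟩ := mem_image.mp hmem
      exact hc u v (mem_filter.mp hv).2 hcv.symm
    have hD3 : D.card ≤ 3 := by
      have hsub : D ⊆ univ.erase (c u) := by
        intro b hb
        refine mem_erase.mpr ⟨?_, mem_univ _⟩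
        intro h
        exact haD (h ▸ hb)
      have := card_le_card hsub
      rwa [card_erase_of_mem (mem_univ _), card_univ, Fintype.card_fin] at this
    have hDd : D.card ≤ d := by
      refine (card_image_le).trans ?_
      refine (card_le_card (filter_subset_filter _ hMS)).trans ?_
      exact le_of_eq rfl
    have hmem_of_cond : ∀ l ∈ perms24,
        (∀ b ∈ D, List.idxOf (c u) l < List.idxOf b l) → u ∈ Xl l := by
      intro l hl hcond
      apply greedy_of_first G c M l ∅ u hu (by simp) (perms24_full l hl (c u))
      intro v hv hadj
      exact hcond (c v) (mem_image.mpr ⟨v, mem_filter.mpr ⟨hv, hadj⟩, rfl⟩)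
    set N : ℕ := perms24.countP fun l => decide (u ∈ Xl l) with hN
    have hNc : perms24.countP
        (fun l => decide (∀ b ∈ D, List.idxOf (c u) l < List.idxOf b l)) ≤ N := by
      apply list_countP_mono
      intro l hl h
      rw [decide_eq_true_eq] at h ⊢
      exact hmem_of_cond l hl h
    have hcount := count_perms (c u) D haD
    have hNmin : 24 ≤ (min d 3 + 1) * N := by
      calc 24 ≤ (D.card + 1) * (perms24.countP
            (fun l => decide (∀ b ∈ D, List.idxOf (c u) l < List.idxOf b l))) := hcount
        _ ≤ (min d 3 + 1) * N := Nat.mul_le_mul (by omega) hNc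
    have hNle : N ≤ 24 := by
      have := List.countP_le_length (p := fun l => decide (u ∈ Xl l)) (l := perms24)
      rwa [perms24_length] at this
    have hsum : (perms24.map fun l => contrib u l).sum
        = N * (HH d + 3 * d) + (24 - N) * (if d ≤ 3 then 2 else 0) := by
      have := list_sum_ite perms24 (fun l => u ∈ Xl l)
        (HH d + 3 * d) (if d ≤ 3 then 2 else 0)
      rw [perms24_length] at this
      exact this
    rw [hsum]
    by_cases hd3 : d ≤ 3
    · have hHH : HH d = 10 + 5 * d := by unfold HH; omega
      have hmin : min d 3 = d := by omega
      rw [hmin] at hNmin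
      have hNd : 24 ≤ N * (d + 1) := by rw [mul_comm] at hNmin; exact hNmin
      have hexp : N * (HH d + 3 * d) = 8 * (N * (d + 1)) + 2 * N := by
        rw [hHH]; ring
      rw [if_pos hd3]
      omega
    · have hHH : HH d = 16 + 3 * d := by unfold HH; omega
      have hmin : min d 3 = 3 := by omega
      rw [hmin] at hNmin
      have hN6 : 6 ≤ N := by
        rw [mul_comm] at hNmin
        omega
      have h40 : 40 ≤ HH d + 3 * d := by omega
      have : 6 * 40 ≤ N * (HH d + 3 * d) := Nat.mul_le_mul hN6 h40
      rw [if_neg hd3]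
      omega
  -- total
  have htotal : 240 * M.card ≤ (perms24.map fun l => ∑ u ∈ M, contrib u l).sum := by
    rw [list_sum_swap]
    calc 240 * M.card = ∑ _u ∈ M, 240 := by
          rw [Finset.sum_const, smul_eq_mul, mul_comm]
      _ ≤ ∑ u ∈ M, (perms24.map fun l => contrib u l).sum := Finset.sum_le_sum hvert
  -- pigeonhole
  have hpig : ∃ l ∈ perms24, 10 * M.card ≤ ∑ u ∈ M, contrib u l := by
    by_contra hcon
    push_neg at hcon
    have hM1 : 1 ≤ M.card := card_pos.mpr hM
    have hb : ∀ x ∈ (perms24.map fun l => ∑ u ∈ M, contrib u l),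
        x ≤ 10 * M.card - 1 := by
      intro x hx
      obtain ⟨l, hl, rfl⟩ := List.mem_map.mp hx
      have := hcon l hl
      omega
    have := List.sum_le_card_nsmul _ _ hb
    rw [List.length_map, perms24_length, smul_eq_mul] at this
    omega
  obtain ⟨l, hl, hbig⟩ := hpig
  refine ⟨Xl l, hXlM l, ?_, hXlind l, ?_⟩
  · obtain ⟨u, hu⟩ := hM
    rcases greedy_cover G c M l ∅ u hu (perms24_full l hl (c u)) with h | ⟨x, hx, _⟩
    · exact ⟨u, h⟩
    · exact ⟨x, hx⟩
  · have := hround l hl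
    omega

end Key
section Main

variable {V : Type*} [DecidableEq V]

lemma slowAux_le (G : SimpleGraph V) [DecidableRel G.Adj] (hcol : G.Colorable 4) :
    ∀ (n : ℕ) (S : Finset V), S.card ≤ n → 10 * slowAux G n S ≤ W2 G S := by
  intro n
  induction n with
  | zero =>
      intro S _
      simp [slowAux]
  | succ n ih =>
      intro S hcard
      show 10 * ((S.powerset.filter fun M => M.Nonempty).sup fun M =>
        M.card + sInf {k : ℕ | ∃ X : Finset V, X ⊆ M ∧ X.Nonempty ∧
          (∀ x ∈ X, ∀ y ∈ X, ¬ G.Adj x y) ∧ k = slowAux G n (S \ X)}) ≤ W2 G S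
      rw [mul_comm]
      rw [← Nat.le_div_iff_mul_le (by norm_num : (0:ℕ) < 10)]
      apply Finset.sup_le
      intro M hMmem
      rw [Nat.le_div_iff_mul_le (by norm_num : (0:ℕ) < 10)]
      rw [mem_filter, mem_powerset] at hMmem
      obtain ⟨hMS, hMne⟩ := hMmem
      obtain ⟨X, hXM, hXne, hXind, hkey⟩ := key_lemma G hcol hMS hMne
      have hsinf : sInf {k : ℕ | ∃ X : Finset V, X ⊆ M ∧ X.Nonempty ∧
          (∀ x ∈ X, ∀ y ∈ X, ¬ G.Adj x y) ∧ k = slowAux G n (S \ X)}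
          ≤ slowAux G n (S \ X) :=
        Nat.sInf_le ⟨X, hXM, hXne, hXind, rfl⟩
      have hXS : X ⊆ S := hXM.trans hMS
      have hcard' : (S \ X).card ≤ n := by
        have h1 : (S \ X).card = S.card - X.card := card_sdiff_of_subset hXS
        have h2 : 1 ≤ X.card := card_pos.mpr hXne
        have h3 : X.card ≤ S.card := card_le_card hXS
        omega
      have hih := ih (S \ X) hcard'
      calc (M.card + sInf _) * 10 = 10 * M.card + 10 * sInf _ := by ring
        _ ≤ 10 * M.card + 10 * slowAux G n (S \ X) := by omega
        _ ≤ 10 * M.card + W2 G (S \ X) := by omega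
        _ ≤ W2 G S := hkey

lemma W2_univ_le (G : SimpleGraph V) [DecidableRel G.Adj] [Fintype V] :
    W2 G univ ≤ 16 * Fintype.card V + 6 * G.edgeFinset.card := by
  have hdeg : ∀ v : V, degIn G univ v = G.degree v := by
    intro v
    unfold degIn
    rw [SimpleGraph.degree, ← SimpleGraph.neighborFinset_eq_filter]
  calc W2 G univ = ∑ v : V, HH (degIn G univ v) := rfl
    _ ≤ ∑ v : V, (16 + 3 * degIn G univ v) := Finset.sum_le_sum fun v _ => HH_le _
    _ = 16 * Fintype.card V + 3 * ∑ v : V, G.degree v := by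
        rw [Finset.sum_add_distrib, Finset.sum_const, card_univ, smul_eq_mul,
          mul_comm, ← Finset.mul_sum]
        congr 2
        exact Finset.sum_congr rfl fun v _ => by rw [hdeg v]
    _ = 16 * Fintype.card V + 6 * G.edgeFinset.card := by
        rw [G.sum_degrees_eq_twice_card_edges]
        ring

end Main

theorem stmt_13 {V : Type*} [Fintype V] [DecidableEq V] (G : SimpleGraph V)
    [DecidableRel G.Adj] (hcol : G.Colorable 4) :
    (slowCost G Finset.univ : ℝ) ≤
      (8 * (Fintype.card V : ℝ) + 3 * (G.edgeFinset.card : ℝ)) / 5 := by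
  have h1 : 10 * slowCost G univ ≤ W2 G univ :=
    slowAux_le G hcol _ _ le_rfl
  have h2 := W2_univ_le G
  have h3 : 10 * slowCost G univ ≤ 16 * Fintype.card V + 6 * G.edgeFinset.card := by
    omega
  have h4 : (10:ℝ) * (slowCost G univ : ℝ)
      ≤ 16 * (Fintype.card V : ℝ) + 6 * (G.edgeFinset.card : ℝ) := by
    exact_mod_cast h3
  linarith
end

section
/- If G is a 4-colorable finite simple graph (chromatic number at most 4), then the sum-color cost satisfies ŝ(G) ≤ Φ(G), where Φ(G) = Σ_{v ∈ V(G)} ( 1 + (1/5)·min(d_G(v), 3) ) + (3/5)·|E(G)| and d_G(v) denotes the degree of v in G. -/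
open Finset

namespace SlowProof

variable {V : Type*} [DecidableEq V] (G : SimpleGraph V) [DecidableRel G.Adj]

/-- degree inside `S` -/
def dS (S : Finset V) (v : V) : ℕ := (S.filter (fun u => G.Adj v u)).card

/-- number of neighbours inside `S` having `S`-degree at most 3 -/
def lS (S : Finset V) (v : V) : ℕ :=
  (S.filter (fun u => G.Adj v u ∧ dS G S u ≤ 3)).card

/-- per-vertex lower bound for the potential drop (scaled by 2) -/
def g2 (S : Finset V) (v : V) : ℕ :=
  10 + 2 * min (dS G S v) 3 + 6 * dS G S v + 2 * lS G S v

/-- the potential (twice the usual one, to stay in `ℕ`) -/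
def Psi (S : Finset V) : ℕ :=
  ∑ v ∈ S, (10 + 2 * min (dS G S v) 3 + 3 * dS G S v)

def c6 (n : ℕ) : ℕ := if n = 0 then 6 else if n = 1 then 3 else 2

lemma c6_antitone {a b : ℕ} (h : a ≤ b) : c6 b ≤ c6 a := by
  unfold c6; split_ifs <;> omega

lemma dS_mono {S T : Finset V} (h : S ⊆ T) (v : V) : dS G S v ≤ dS G T v :=
  Finset.card_le_card (Finset.filter_subset_filter _ h)

lemma lS_le_dS (S : Finset V) (v : V) : lS G S v ≤ dS G S v := by
  apply Finset.card_le_card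
  intro u hu
  simp only [Finset.mem_filter] at hu ⊢
  exact ⟨hu.1, hu.2.1⟩

/-- The drop lemma : removing an independent set `X` from `S` decreases the
potential by at least `∑_{x∈X} g2 x`. -/
lemma drop (S X : Finset V) (hXS : X ⊆ S)
    (hind : ∀ x ∈ X, ∀ y ∈ X, ¬ G.Adj x y) :
    Psi G (S \ X) + ∑ x ∈ X, g2 G S x ≤ Psi G S := by
  classical
  set a : V → ℕ := fun v => (X.filter (fun u => G.Adj v u)).card with ha
  have hdsub : ∀ v, dS G (S \ X) v = dS G S v - a v ∧ a v ≤ dS G S v := by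
    intro v
    have hset : (S \ X).filter (fun u => G.Adj v u) =
        (S.filter (fun u => G.Adj v u)) \ (X.filter (fun u => G.Adj v u)) := by
      ext u
      simp only [Finset.mem_sdiff, Finset.mem_filter]
      tauto
    refine ⟨?_, Finset.card_le_card (Finset.filter_subset_filter _ hXS)⟩
    rw [dS, hset, Finset.card_sdiff_of_subset (Finset.filter_subset_filter _ hXS)]
    rfl
  -- pointwise estimate on surviving vertices
  have key : ∀ v ∈ S \ X,
      (10 + 2 * min (dS G (S \ X) v) 3 + 3 * dS G (S \ X) v)
        + (3 * a v + 2 * (if dS G S v ≤ 3 then a v else 0))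
      ≤ 10 + 2 * min (dS G S v) 3 + 3 * dS G S v := by
    intro v _
    obtain ⟨h1, h2⟩ := hdsub v
    rw [h1]
    by_cases hl : dS G S v ≤ 3
    · have e1 : min (dS G S v) 3 = dS G S v := min_eq_left hl
      have e2 : min (dS G S v - a v) 3 = dS G S v - a v :=
        min_eq_left (by omega)
      rw [if_pos hl, e1, e2]; omega
    · have e1 : min (dS G S v) 3 = 3 := min_eq_right (by omega)
      have e2 : min (dS G S v - a v) 3 ≤ 3 := min_le_right _ _
      rw [if_neg hl, e1]; omega
  have hsum : Psi G (S \ X)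
      + ∑ v ∈ S \ X, (3 * a v + 2 * (if dS G S v ≤ 3 then a v else 0))
      ≤ ∑ v ∈ S \ X, (10 + 2 * min (dS G S v) 3 + 3 * dS G S v) := by
    rw [Psi, ← Finset.sum_add_distrib]
    exact Finset.sum_le_sum key
  -- edge counting
  have hE1 : ∑ v ∈ S \ X, a v = ∑ x ∈ X, dS G S x := by
    have : ∀ v, a v = ∑ x ∈ X, (if G.Adj v x then 1 else 0) := by
      intro v
      show (X.filter (fun u => G.Adj v u)).card = _
      rw [Finset.card_filter]
    calc ∑ v ∈ S \ X, a v
        = ∑ v ∈ S \ X, ∑ x ∈ X, (if G.Adj v x then 1 else 0) := by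
          exact Finset.sum_congr rfl (fun v _ => this v)
      _ = ∑ x ∈ X, ∑ v ∈ S \ X, (if G.Adj v x then 1 else 0) :=
          Finset.sum_comm
      _ = ∑ x ∈ X, dS G S x := by
          refine Finset.sum_congr rfl (fun x hx => ?_)
          have : ∑ v ∈ S \ X, (if G.Adj v x then 1 else 0)
              = ((S \ X).filter (fun v => G.Adj x v)).card := by
            rw [Finset.card_filter]
            exact Finset.sum_congr rfl (fun v _ => by
              by_cases h : G.Adj v x
              · rw [if_pos h, if_pos (G.adj_symm h)]
              · rw [if_neg h, if_neg (fun hh => h (G.adj_symm hh))])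
          rw [this, dS]
          congr 1
          ext u
          simp only [Finset.mem_sdiff, Finset.mem_filter]
          constructor
          · rintro ⟨⟨hu, _⟩, hadj⟩; exact ⟨hu, hadj⟩
          · rintro ⟨hu, hadj⟩
            refine ⟨⟨hu, fun huX => ?_⟩, hadj⟩
            exact hind x hx u huX hadj
  have hE2 : ∑ v ∈ S \ X, (if dS G S v ≤ 3 then a v else 0)
      = ∑ x ∈ X, lS G S x := by
    have : ∀ v, (if dS G S v ≤ 3 then a v else 0)
        = ∑ x ∈ X, (if G.Adj v x ∧ dS G S v ≤ 3 then 1 else 0) := by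
      intro v
      by_cases hl : dS G S v ≤ 3
      · rw [if_pos hl]
        show (X.filter (fun u => G.Adj v u)).card = _
        rw [Finset.card_filter]
        exact Finset.sum_congr rfl (fun x _ => by
          by_cases h : G.Adj v x
          · rw [if_pos h, if_pos ⟨h, hl⟩]
          · rw [if_neg h, if_neg (fun hh => h hh.1)])
      · rw [if_neg hl]
        symm
        apply Finset.sum_eq_zero
        intro x _
        rw [if_neg (fun hh => hl hh.2)]
    calc ∑ v ∈ S \ X, (if dS G S v ≤ 3 then a v else 0)
        = ∑ v ∈ S \ X, ∑ x ∈ X, (if G.Adj v x ∧ dS G S v ≤ 3 then 1 else 0) :=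
          Finset.sum_congr rfl (fun v _ => this v)
      _ = ∑ x ∈ X, ∑ v ∈ S \ X, (if G.Adj v x ∧ dS G S v ≤ 3 then 1 else 0) :=
          Finset.sum_comm
      _ = ∑ x ∈ X, lS G S x := by
          refine Finset.sum_congr rfl (fun x hx => ?_)
          have h1 : ∑ v ∈ S \ X, (if G.Adj v x ∧ dS G S v ≤ 3 then 1 else 0)
              = ((S \ X).filter (fun v => G.Adj x v ∧ dS G S v ≤ 3)).card := by
            rw [Finset.card_filter]
            exact Finset.sum_congr rfl (fun v _ => by
              by_cases h : G.Adj v x ∧ dS G S v ≤ 3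
              · rw [if_pos h, if_pos ⟨G.adj_symm h.1, h.2⟩]
              · rw [if_neg h, if_neg (fun hh => h ⟨G.adj_symm hh.1, hh.2⟩)])
          rw [h1, lS]
          congr 1
          ext u
          simp only [Finset.mem_sdiff, Finset.mem_filter]
          constructor
          · rintro ⟨⟨hu, _⟩, hadj⟩; exact ⟨hu, hadj⟩
          · rintro ⟨hu, hadj⟩
            refine ⟨⟨hu, fun huX => ?_⟩, hadj⟩
            exact hind x hx u huX hadj.1
  have hsplit : ∑ v ∈ S \ X, (10 + 2 * min (dS G S v) 3 + 3 * dS G S v)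
      + ∑ x ∈ X, (10 + 2 * min (dS G S x) 3 + 3 * dS G S x) = Psi G S :=
    Finset.sum_sdiff hXS
  have hg2 : ∑ x ∈ X, g2 G S x
      = ∑ x ∈ X, (10 + 2 * min (dS G S x) 3 + 3 * dS G S x)
        + (3 * ∑ x ∈ X, dS G S x + 2 * ∑ x ∈ X, lS G S x) := by
    rw [Finset.mul_sum, Finset.mul_sum, ← Finset.sum_add_distrib,
      ← Finset.sum_add_distrib]
    exact Finset.sum_congr rfl (fun x _ => by rw [g2]; ring)
  have hdistr : ∑ v ∈ S \ X, (3 * a v + 2 * (if dS G S v ≤ 3 then a v else 0))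
      = 3 * ∑ x ∈ X, dS G S x + 2 * ∑ x ∈ X, lS G S x := by
    rw [Finset.sum_add_distrib, ← Finset.mul_sum, ← Finset.mul_sum, hE1, hE2]
  omega

/-- Lemma W : weighted maximal independent sets in graphs of max degree 2. -/
lemma lemW : ∀ (n : ℕ) (T : Finset V) (w : V → ℕ), T.card ≤ n →
    (∀ y ∈ T, dS G T y ≤ 2) →
    ∃ Y ⊆ T, (∀ a ∈ Y, ∀ b ∈ Y, ¬ G.Adj a b) ∧
      60 * T.card + ∑ y ∈ T, c6 (dS G T y) * w y ≤
        6 * ∑ y ∈ Y, (10 * (1 + dS G T y) + w y) := by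
  intro n
  induction n with
  | zero =>
    intro T w hcard _
    have hT : T = ∅ := Finset.card_eq_zero.mp (Nat.le_zero.mp hcard)
    subst hT
    exact ⟨∅, Finset.empty_subset _, by simp, by simp⟩
  | succ n ih =>
    intro T w hcard hΔ
    rcases T.eq_empty_or_nonempty with rfl | hT
    · exact ⟨∅, Finset.empty_subset _, by simp, by simp⟩
    set stuff : V → ℕ :=
      fun v => ∑ u ∈ T.filter (fun u => G.Adj v u), c6 (dS G T u) * w u with hstuff
    -- the defect identity
    have hsum : ∑ v ∈ T, stuff v = ∑ v ∈ T, (6 - c6 (dS G T v)) * w v := by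
      calc ∑ v ∈ T, stuff v
          = ∑ v ∈ T, ∑ u ∈ T, (if G.Adj v u then c6 (dS G T u) * w u else 0) := by
            refine Finset.sum_congr rfl fun v _ => ?_
            show ∑ u ∈ T.filter (fun u => G.Adj v u), c6 (dS G T u) * w u = _
            rw [Finset.sum_filter]
        _ = ∑ u ∈ T, ∑ v ∈ T, (if G.Adj v u then c6 (dS G T u) * w u else 0) :=
            Finset.sum_comm
        _ = ∑ u ∈ T, (dS G T u) * (c6 (dS G T u) * w u) := by
            refine Finset.sum_congr rfl fun u _ => ?_
            rw [← Finset.sum_filter, Finset.sum_const, smul_eq_mul]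
            congr 1
            rw [dS]
            congr 1
            ext v
            simp only [Finset.mem_filter]
            exact and_congr_right (fun _ => G.adj_comm v u)
        _ = ∑ v ∈ T, (6 - c6 (dS G T v)) * w v := by
            refine Finset.sum_congr rfl fun u hu => ?_
            have h2 := hΔ u hu
            have h3 : dS G T u = 0 ∨ dS G T u = 1 ∨ dS G T u = 2 := by omega
            rcases h3 with h|h|h <;> rw [h] <;> simp [c6] <;> ring
    -- a vertex with nonnegative defect
    have hex : ∃ v ∈ T, stuff v ≤ (6 - c6 (dS G T v)) * w v := by
      by_contra hcon
      push_neg at hcon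
      have := Finset.sum_lt_sum_of_nonempty hT hcon
      omega
    obtain ⟨v, hvT, hvle⟩ := hex
    have hkey : c6 (dS G T v) * w v + stuff v ≤ 6 * w v := by
      have h6 : c6 (dS G T v) ≤ 6 := by unfold c6; split_ifs <;> omega
      have heq : c6 (dS G T v) * w v + (6 - c6 (dS G T v)) * w v = 6 * w v := by
        rw [← add_mul]
        congr 1
        omega
      calc c6 (dS G T v) * w v + stuff v
          ≤ c6 (dS G T v) * w v + (6 - c6 (dS G T v)) * w v :=
            Nat.add_le_add_left hvle _
        _ = 6 * w v := heq
    -- remove the closed neighbourhood of v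
    set Nv : Finset V := insert v (T.filter (fun u => G.Adj v u)) with hNv
    have hvnotin : v ∉ T.filter (fun u => G.Adj v u) := by
      simp only [Finset.mem_filter]
      exact fun h => G.irrefl h.2
    have hNvsub : Nv ⊆ T :=
      Finset.insert_subset hvT (Finset.filter_subset _ _)
    have hNvcard : Nv.card = 1 + dS G T v := by
      rw [hNv, Finset.card_insert_of_notMem hvnotin, dS]
      omega
    set T' : Finset V := T \ Nv with hT'
    have hT'sub : T' ⊆ T := Finset.sdiff_subset
    have hT'card : T.card = T'.card + (1 + dS G T v) := by
      have h1 : T'.card = T.card - Nv.card := Finset.card_sdiff_of_subset hNvsub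
      have h2 : Nv.card ≤ T.card := Finset.card_le_card hNvsub
      omega
    have hΔ' : ∀ y ∈ T', dS G T' y ≤ 2 :=
      fun y hy => le_trans (dS_mono G hT'sub y) (hΔ y (hT'sub hy))
    have hT'le : T'.card ≤ n := by
      have h1 : 1 ≤ T.card := Finset.card_pos.mpr hT
      omega
    obtain ⟨Y', hY'sub, hY'ind, hY'b⟩ := ih T' w hT'le hΔ'
    have hvY' : v ∉ Y' := by
      intro hv
      have : v ∈ T' := hY'sub hv
      rw [hT'] at this
      exact (Finset.mem_sdiff.mp this).2 (Finset.mem_insert_self _ _)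
    refine ⟨insert v Y', ?_, ?_, ?_⟩
    · exact Finset.insert_subset hvT (hY'sub.trans hT'sub)
    · -- independence
      intro x hx y hy
      rcases Finset.mem_insert.mp hx with rfl | hx' <;>
        rcases Finset.mem_insert.mp hy with rfl | hy'
      · exact G.irrefl
      · intro hadj
        have hyT' := hY'sub hy'
        rw [hT'] at hyT'
        exact (Finset.mem_sdiff.mp hyT').2
          (Finset.mem_insert_of_mem (Finset.mem_filter.mpr
            ⟨(Finset.mem_sdiff.mp hyT').1, hadj⟩))
      · intro hadj
        have hxT' := hY'sub hx'
        rw [hT'] at hxT'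
        exact (Finset.mem_sdiff.mp hxT').2
          (Finset.mem_insert_of_mem (Finset.mem_filter.mpr
            ⟨(Finset.mem_sdiff.mp hxT').1, G.adj_symm hadj⟩))
      · exact hY'ind x hx' y hy'
    · -- the bound
      have hTsum : ∑ y ∈ T, c6 (dS G T y) * w y
          = ∑ y ∈ T', c6 (dS G T y) * w y
            + (c6 (dS G T v) * w v + stuff v) := by
        rw [← Finset.sum_sdiff hNvsub, ← hT']
        congr 1
        rw [hNv, Finset.sum_insert hvnotin]
      have hY'chain : 60 * T'.card + ∑ y ∈ T', c6 (dS G T y) * w y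
          ≤ 6 * ∑ y ∈ Y', (10 * (1 + dS G T y) + w y) := by
        calc 60 * T'.card + ∑ y ∈ T', c6 (dS G T y) * w y
            ≤ 60 * T'.card + ∑ y ∈ T', c6 (dS G T' y) * w y := by
              refine Nat.add_le_add_left (Finset.sum_le_sum fun y _ => ?_) _
              exact Nat.mul_le_mul_right _ (c6_antitone (dS_mono G hT'sub y))
          _ ≤ 6 * ∑ y ∈ Y', (10 * (1 + dS G T' y) + w y) := hY'b
          _ ≤ 6 * ∑ y ∈ Y', (10 * (1 + dS G T y) + w y) := by
              refine Nat.mul_le_mul_left _ (Finset.sum_le_sum fun y _ => ?_)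
              have := dS_mono G hT'sub y
              omega
      have h2 : 60 * (1 + dS G T v) + (c6 (dS G T v) * w v + stuff v)
          ≤ 6 * (10 * (1 + dS G T v) + w v) := by
        calc 60 * (1 + dS G T v) + (c6 (dS G T v) * w v + stuff v)
            ≤ 60 * (1 + dS G T v) + 6 * w v := Nat.add_le_add_left hkey _
          _ = 6 * (10 * (1 + dS G T v) + w v) := by ring
      calc 60 * T.card + ∑ y ∈ T, c6 (dS G T y) * w y
          = (60 * T'.card + ∑ y ∈ T', c6 (dS G T y) * w y)
            + (60 * (1 + dS G T v) + (c6 (dS G T v) * w v + stuff v)) := by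
            rw [hTsum, hT'card]
            ring
        _ ≤ 6 * ∑ y ∈ Y', (10 * (1 + dS G T y) + w y)
            + 6 * (10 * (1 + dS G T v) + w v) :=
            Nat.add_le_add hY'chain h2
        _ = 6 * ∑ y ∈ insert v Y', (10 * (1 + dS G T y) + w y) := by
            rw [Finset.sum_insert hvY']
            ring

/-- number of neighbours in `M` that are low (S-degree ≤ 3) -/
def nLow (S M : Finset V) (y : V) : ℕ :=
  (M.filter (fun u => G.Adj y u ∧ dS G S u ≤ 3)).card

/-- number of neighbours in `M` that are high (S-degree ≥ 4) -/
def nHigh (S M : Finset V) (y : V) : ℕ :=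
  (M.filter (fun u => G.Adj y u ∧ ¬ dS G S u ≤ 3)).card

lemma nsum (S M : Finset V) (y : V) :
    nLow G S M y + nHigh G S M y = (M.filter (fun u => G.Adj y u)).card := by
  rw [nLow, nHigh, ← Finset.filter_filter, ← Finset.filter_filter]
  exact Finset.card_filter_add_card_filter_not _

lemma dM_le_dS {S M : Finset V} (hMS : M ⊆ S) (y : V) :
    (M.filter (fun u => G.Adj y u)).card ≤ dS G S y :=
  Finset.card_le_card (Finset.filter_subset_filter _ hMS)

lemma nLow_le_lS {S M : Finset V} (hMS : M ⊆ S) (y : V) :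
    nLow G S M y ≤ lS G S y :=
  Finset.card_le_card (Finset.filter_subset_filter _ hMS)

lemma low_g2 {S M : Finset V} (hMS : M ⊆ S) (y : V) (hy : dS G S y ≤ 3) :
    10 + 10 * nLow G S M y + 8 * nHigh G S M y ≤ g2 G S y := by
  have h1 := nsum G S M y
  have h2 := dM_le_dS G hMS y
  have h3 := nLow_le_lS G hMS y
  rw [g2, min_eq_left hy]
  omega

lemma high_g2 {S M : Finset V} (hMS : M ⊆ S) (y : V) (hy : ¬ dS G S y ≤ 3) :
    40 + 2 * nLow G S M y ≤ g2 G S y := by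
  have h3 := nLow_le_lS G hMS y
  rw [g2, min_eq_right (by omega)]
  omega

lemma fubiniLH (S M : Finset V) :
    ∑ h ∈ M.filter (fun v => ¬ dS G S v ≤ 3), nLow G S M h
      = ∑ y ∈ M.filter (fun v => dS G S v ≤ 3), nHigh G S M y := by
  have e1 : ∀ h : V, nLow G S M h
      = ∑ y ∈ M.filter (fun v => dS G S v ≤ 3), (if G.Adj h y then 1 else 0) := by
    intro h
    rw [nLow, Finset.card_filter, Finset.sum_filter]
    refine Finset.sum_congr rfl fun u _ => ?_
    by_cases h1 : G.Adj h u <;> by_cases h2 : dS G S u ≤ 3 <;> simp [h1, h2]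
  have e2 : ∀ y : V, nHigh G S M y
      = ∑ h ∈ M.filter (fun v => ¬ dS G S v ≤ 3), (if G.Adj h y then 1 else 0) := by
    intro y
    rw [nHigh, Finset.card_filter, Finset.sum_filter]
    refine Finset.sum_congr rfl fun u _ => ?_
    by_cases h1 : G.Adj y u <;> by_cases h2 : dS G S u ≤ 3 <;>
      simp [G.adj_comm u y, h1, h2]
  rw [Finset.sum_congr rfl fun h _ => e1 h, Finset.sum_congr rfl fun y _ => e2 y]
  exact Finset.sum_comm

/-- The main combinatorial lemma. -/
lemma main (c : V → Fin 4) (hc : ∀ {a b : V}, G.Adj a b → c a ≠ c b)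
    (S : Finset V) :
    ∀ (n : ℕ) (M : Finset V), M.card ≤ n → M ⊆ S → M.Nonempty →
    ∃ X ⊆ M, X.Nonempty ∧ (∀ a ∈ X, ∀ b ∈ X, ¬ G.Adj a b) ∧
      10 * M.card ≤ ∑ x ∈ X, g2 G S x := by
  intro n
  induction n with
  | zero =>
    intro M hMcard _ hMne
    have := Finset.card_pos.mpr hMne
    omega
  | succ n ih =>
    intro M hMcard hMS hMne
    by_cases hun : ∃ x ∈ M,
        10 * (1 + (M.filter (fun u => G.Adj x u)).card) ≤ g2 G S x
    · -- a "non-tight" vertex exists : remove its closed neighbourhood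
      obtain ⟨x, hxM, hxg⟩ := hun
      have hxnotin : x ∉ M.filter (fun u => G.Adj x u) := by
        simp only [Finset.mem_filter]
        exact fun h => G.irrefl h.2
      have hNxsub : insert x (M.filter (fun u => G.Adj x u)) ⊆ M :=
        Finset.insert_subset hxM (Finset.filter_subset _ _)
      have hNxcard : (insert x (M.filter (fun u => G.Adj x u))).card
          = 1 + (M.filter (fun u => G.Adj x u)).card := by
        rw [Finset.card_insert_of_notMem hxnotin]
        omega
      set M' : Finset V := M \ insert x (M.filter (fun u => G.Adj x u)) with hM'
      have hM'card : M.card = M'.card + (1 + (M.filter (fun u => G.Adj x u)).card) := by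
        have h1 : M'.card = M.card - (insert x (M.filter (fun u => G.Adj x u))).card :=
          Finset.card_sdiff_of_subset hNxsub
        have h2 := Finset.card_le_card hNxsub
        omega
      rcases M'.eq_empty_or_nonempty with hM'e | hM'ne
      · -- X = {x} does the job
        refine ⟨{x}, Finset.singleton_subset_iff.mpr hxM,
          Finset.singleton_nonempty x, ?_, ?_⟩
        · intro a ha b hb
          rw [Finset.mem_singleton] at ha hb
          subst ha; subst hb
          exact G.irrefl
        · rw [Finset.sum_singleton]
          have : M'.card = 0 := by rw [hM'e]; rfl
          omega
      · have hM'n : M'.card ≤ n := by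
          have h1 : 1 ≤ M.card := Finset.card_pos.mpr hMne
          omega
        obtain ⟨X', hX'sub, hX'ne, hX'ind, hX'b⟩ :=
          ih M' hM'n ((Finset.sdiff_subset).trans hMS) hM'ne
        have hxX' : x ∉ X' := by
          intro hx
          have := hX'sub hx
          rw [hM'] at this
          exact (Finset.mem_sdiff.mp this).2 (Finset.mem_insert_self _ _)
        have hnoadj : ∀ y ∈ X', ¬ G.Adj x y := by
          intro y hy hadj
          have := hX'sub hy
          rw [hM'] at this
          obtain ⟨hyM, hynot⟩ := Finset.mem_sdiff.mp this
          exact hynot (Finset.mem_insert_of_mem (Finset.mem_filter.mpr ⟨hyM, hadj⟩))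
        refine ⟨insert x X',
          Finset.insert_subset hxM (hX'sub.trans Finset.sdiff_subset),
          Finset.insert_nonempty _ _, ?_, ?_⟩
        · intro a ha b hb
          rcases Finset.mem_insert.mp ha with rfl | ha' <;>
            rcases Finset.mem_insert.mp hb with rfl | hb'
          · exact G.irrefl
          · exact hnoadj b hb'
          · exact fun hadj => hnoadj a ha' (G.adj_symm hadj)
          · exact hX'ind a ha' b hb'
        · rw [Finset.sum_insert hxX']
          omega
    · -- tight case
      push_neg at hun
      set L : Finset V := M.filter (fun y => dS G S y ≤ 3) with hLdef
      set Hv : Finset V := M.filter (fun y => ¬ dS G S y ≤ 3) with hHdef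
      have hLM : L ⊆ M := Finset.filter_subset _ _
      have hHM : Hv ⊆ M := Finset.filter_subset _ _
      have hcardLH : L.card + Hv.card = M.card := by
        rw [hLdef, hHdef]
        exact Finset.card_filter_add_card_filter_not _
      -- low vertices have at most two low neighbours in M
      have hnL2 : ∀ y ∈ L, nLow G S M y ≤ 2 := by
        intro y hy
        rw [hLdef, Finset.mem_filter] at hy
        obtain ⟨hyM, hylow⟩ := hy
        by_contra hcon
        push_neg at hcon
        have h3 : 3 ≤ lS G S y := le_trans hcon (nLow_le_lS G hMS y)
        have h4 : lS G S y ≤ dS G S y := lS_le_dS G S y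
        have h6 := hun y hyM
        have h7 : (M.filter (fun u => G.Adj y u)).card ≤ dS G S y := dM_le_dS G hMS y
        rw [g2, min_eq_left hylow] at h6
        omega
      set Z : Fin 4 → Finset V := fun i => Hv.filter (fun z => c z = i) with hZdef
      set T : Fin 4 → Finset V :=
        fun i => L.filter (fun y => ∀ z ∈ Z i, ¬ G.Adj y z) with hTdef
      have hTL : ∀ i, T i ⊆ L := by
        intro i
        rw [hTdef]
        exact Finset.filter_subset _ _
      have hZH : ∀ i, Z i ⊆ Hv := by
        intro i
        rw [hZdef]
        exact Finset.filter_subset _ _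
      have hTd2 : ∀ i, ∀ y ∈ T i, dS G (T i) y ≤ nLow G S M y := by
        intro i y _
        refine Finset.card_le_card ?_
        intro u hu
        obtain ⟨huT, hadj⟩ := Finset.mem_filter.mp hu
        have huL : u ∈ L := hTL i huT
        rw [hLdef, Finset.mem_filter] at huL
        exact Finset.mem_filter.mpr ⟨huL.1, hadj, huL.2⟩
      have hTdeg : ∀ i, ∀ y ∈ T i, dS G (T i) y ≤ 2 :=
        fun i y hy => le_trans (hTd2 i y hy) (hnL2 y (hTL i hy))
      have hW : ∀ i : Fin 4, ∃ Y ⊆ T i, (∀ a ∈ Y, ∀ b ∈ Y, ¬ G.Adj a b) ∧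
          60 * (T i).card
            + ∑ y ∈ T i, c6 (dS G (T i) y) * (8 * nHigh G S M y) ≤
          6 * ∑ y ∈ Y, (10 * (1 + dS G (T i) y) + 8 * nHigh G S M y) :=
        fun i => lemW G (T i).card (T i)
          (fun y => 8 * nHigh G S M y) le_rfl (hTdeg i)
      choose Y hYsub hYind hYb using hW
      -- per-class lower bound for the Y-part
      have hYlow : ∀ i : Fin 4,
          60 * (T i).card
            + ∑ y ∈ T i, 8 * (c6 (nLow G S M y) * nHigh G S M y)
          ≤ 6 * ∑ y ∈ Y i, g2 G S y := by
        intro i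
        have step1 : ∑ y ∈ T i, 8 * (c6 (nLow G S M y) * nHigh G S M y)
            ≤ ∑ y ∈ T i, c6 (dS G (T i) y) * (8 * nHigh G S M y) := by
          refine Finset.sum_le_sum fun y hy => ?_
          have hmon := c6_antitone (hTd2 i y hy)
          calc 8 * (c6 (nLow G S M y) * nHigh G S M y)
              = c6 (nLow G S M y) * (8 * nHigh G S M y) := by ring
            _ ≤ c6 (dS G (T i) y) * (8 * nHigh G S M y) :=
                Nat.mul_le_mul_right _ hmon
        have step2 : ∑ y ∈ Y i, (10 * (1 + dS G (T i) y) + 8 * nHigh G S M y)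
            ≤ ∑ y ∈ Y i, g2 G S y := by
          refine Finset.sum_le_sum fun y hy => ?_
          have hyT := hYsub i hy
          have hdle := hTd2 i y hyT
          have hyL := hTL i hyT
          rw [hLdef, Finset.mem_filter] at hyL
          have hg := low_g2 G hMS y hyL.2
          omega
        calc 60 * (T i).card
              + ∑ y ∈ T i, 8 * (c6 (nLow G S M y) * nHigh G S M y)
            ≤ 60 * (T i).card
              + ∑ y ∈ T i, c6 (dS G (T i) y) * (8 * nHigh G S M y) :=
              Nat.add_le_add_left step1 _
          _ ≤ 6 * ∑ y ∈ Y i, (10 * (1 + dS G (T i) y) + 8 * nHigh G S M y) :=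
              hYb i
          _ ≤ 6 * ∑ y ∈ Y i, g2 G S y := Nat.mul_le_mul_left _ step2
      -- the colour classes partition the high vertices
      have hZsum : ∑ i : Fin 4, ∑ z ∈ Z i, g2 G S z = ∑ z ∈ Hv, g2 G S z := by
        rw [hZdef]
        exact Finset.sum_fiberwise_of_maps_to (fun z _ => Finset.mem_univ (c z)) _
      -- weight of the high vertices
      have hA1 : ∑ z ∈ Hv, (40 + 2 * nLow G S M z) ≤ ∑ z ∈ Hv, g2 G S z := by
        refine Finset.sum_le_sum fun z hz => ?_
        rw [hHdef, Finset.mem_filter] at hz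
        exact high_g2 G hMS z hz.2
      have hA2 : ∑ z ∈ Hv, (40 + 2 * nLow G S M z)
          = 40 * Hv.card + 2 * ∑ z ∈ Hv, nLow G S M z := by
        rw [Finset.sum_add_distrib, Finset.sum_const, smul_eq_mul,
          ← Finset.mul_sum, mul_comm Hv.card 40]
      have hA3 : ∑ z ∈ Hv, nLow G S M z = ∑ y ∈ L, nHigh G S M y := by
        rw [hHdef, hLdef]
        exact fubiniLH G S M
      -- blocked classes are bounded by the number of high neighbours
      set k : V → ℕ := fun y =>
        (Finset.univ.filter (fun i : Fin 4 => ∀ z ∈ Z i, ¬ G.Adj y z)).card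
        with hkdef
      have hkn : ∀ y ∈ L, 4 ≤ k y + nHigh G S M y := by
        intro y _
        have hsplit : k y
            + (Finset.univ.filter
                (fun i : Fin 4 => ¬ ∀ z ∈ Z i, ¬ G.Adj y z)).card
            = 4 := by
          rw [hkdef]
          have := Finset.card_filter_add_card_filter_not
            (s := (Finset.univ : Finset (Fin 4)))
            (p := fun i : Fin 4 => ∀ z ∈ Z i, ¬ G.Adj y z)
          simpa using this
        have himg : (Finset.univ.filter
              (fun i : Fin 4 => ¬ ∀ z ∈ Z i, ¬ G.Adj y z))
            ⊆ (Hv.filter (fun z => G.Adj y z)).image c := by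
          intro i hi
          rw [Finset.mem_filter] at hi
          push_neg at hi
          obtain ⟨z, hzZ, hadj⟩ := hi.2
          rw [hZdef, Finset.mem_filter] at hzZ
          exact Finset.mem_image.mpr
            ⟨z, Finset.mem_filter.mpr ⟨hzZ.1, hadj⟩, hzZ.2⟩
        have h2 := Finset.card_image_le
          (s := Hv.filter (fun z => G.Adj y z)) (f := c)
        have h3 : (Hv.filter (fun z => G.Adj y z)).card = nHigh G S M y := by
          rw [hHdef, nHigh]
          congr 1
          ext u
          simp only [Finset.mem_filter]
          tauto
        have h4 := Finset.card_le_card himg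
        omega
      -- the key numeric inequality per low vertex
      have hkey : ∀ y ∈ L, 240 ≤ 12 * nHigh G S M y
          + k y * (60 + 8 * (c6 (nLow G S M y) * nHigh G S M y)) := by
        intro y hy
        have h1 : nLow G S M y + nHigh G S M y ≤ 3 := by
          have e1 := nsum G S M y
          have e2 := dM_le_dS G hMS y
          rw [hLdef, Finset.mem_filter] at hy
          omega
        have h4 := hkn y hy
        have hnl : nLow G S M y = 0 ∨ nLow G S M y = 1 ∨ 2 ≤ nLow G S M y := by
          omega
        have hnh : nHigh G S M y = 0 ∨ nHigh G S M y = 1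
            ∨ nHigh G S M y = 2 ∨ nHigh G S M y = 3 := by omega
        rcases hnl with h|h|h <;>
          [ (have hc : c6 (nLow G S M y) = 6 := by rw [h]; rfl);
            (have hc : c6 (nLow G S M y) = 3 := by rw [h]; rfl);
            (have hc : c6 (nLow G S M y) = 2 := by
              unfold c6; split_ifs <;> omega) ] <;>
          rw [hc] <;>
          (rcases hnh with h'|h'|h'|h' <;> rw [h'] <;> omega)
      -- summing the key inequality over the classes
      have hB1 : ∀ i : Fin 4,
          ∑ y ∈ T i, (60 + 8 * (c6 (nLow G S M y) * nHigh G S M y))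
          = 60 * (T i).card
            + ∑ y ∈ T i, 8 * (c6 (nLow G S M y) * nHigh G S M y) := by
        intro i
        rw [Finset.sum_add_distrib, Finset.sum_const, smul_eq_mul,
          mul_comm (T i).card 60]
      have hB2 : ∑ i : Fin 4,
          ∑ y ∈ T i, (60 + 8 * (c6 (nLow G S M y) * nHigh G S M y))
          = ∑ y ∈ L, k y * (60 + 8 * (c6 (nLow G S M y) * nHigh G S M y)) := by
        calc ∑ i : Fin 4,
            ∑ y ∈ T i, (60 + 8 * (c6 (nLow G S M y) * nHigh G S M y))
            = ∑ i : Fin 4, ∑ y ∈ L,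
              (if (∀ z ∈ Z i, ¬ G.Adj y z) then
                (60 + 8 * (c6 (nLow G S M y) * nHigh G S M y)) else 0) := by
              refine Finset.sum_congr rfl fun i _ => ?_
              rw [hTdef]
              exact Finset.sum_filter _ _
          _ = ∑ y ∈ L, ∑ i : Fin 4,
              (if (∀ z ∈ Z i, ¬ G.Adj y z) then
                (60 + 8 * (c6 (nLow G S M y) * nHigh G S M y)) else 0) :=
              Finset.sum_comm
          _ = ∑ y ∈ L, k y
              * (60 + 8 * (c6 (nLow G S M y) * nHigh G S M y)) := by
              refine Finset.sum_congr rfl fun y _ => ?_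
              rw [← Finset.sum_filter, Finset.sum_const, smul_eq_mul, hkdef]
      -- grand total
      have hgrand : ∑ i : Fin 4, 60 * M.card
          ≤ ∑ i : Fin 4, 6 * ∑ x ∈ Z i ∪ Y i, g2 G S x := by
        have hdisj : ∀ i, Disjoint (Z i) (Y i) := by
          intro i
          rw [Finset.disjoint_left]
          intro a haZ haY
          have h1 : a ∈ Hv := hZH i haZ
          have h2 : a ∈ L := hTL i (hYsub i haY)
          rw [hHdef, Finset.mem_filter] at h1
          rw [hLdef, Finset.mem_filter] at h2
          exact h1.2 h2.2
        have hXsum : ∑ i : Fin 4, 6 * ∑ x ∈ Z i ∪ Y i, g2 G S x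
            = 6 * ∑ z ∈ Hv, g2 G S z
              + ∑ i : Fin 4, 6 * ∑ y ∈ Y i, g2 G S y := by
          rw [← hZsum, Finset.mul_sum, ← Finset.sum_add_distrib]
          refine Finset.sum_congr rfl fun i _ => ?_
          rw [Finset.sum_union (hdisj i)]
          ring
        have hYtot : ∑ y ∈ L, k y
              * (60 + 8 * (c6 (nLow G S M y) * nHigh G S M y))
            ≤ ∑ i : Fin 4, 6 * ∑ y ∈ Y i, g2 G S y := by
          rw [← hB2]
          refine Finset.sum_le_sum fun i _ => ?_
          rw [hB1 i]
          exact hYlow i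
        have hHtot : 240 * Hv.card + 12 * ∑ y ∈ L, nHigh G S M y
            ≤ 6 * ∑ z ∈ Hv, g2 G S z := by
          have := hA1
          rw [hA2, hA3] at this
          omega
        have hLtot : 240 * L.card
            ≤ 12 * ∑ y ∈ L, nHigh G S M y
              + ∑ y ∈ L, k y
                * (60 + 8 * (c6 (nLow G S M y) * nHigh G S M y)) := by
          have h1 : ∑ y ∈ L, (240:ℕ)
              ≤ ∑ y ∈ L, (12 * nHigh G S M y
                + k y * (60 + 8 * (c6 (nLow G S M y) * nHigh G S M y))) :=
            Finset.sum_le_sum hkey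
          rw [Finset.sum_const, smul_eq_mul, mul_comm L.card 240] at h1
          rw [Finset.sum_add_distrib, ← Finset.mul_sum] at h1
          omega
        have hconst : ∑ i : Fin 4, 60 * M.card = 240 * M.card := by
          rw [Finset.sum_const, Finset.card_univ]
          simp
          ring
        rw [hconst, hXsum]
        omega
      -- extract a good colour class
      have hex : ∃ i : Fin 4, 60 * M.card ≤ 6 * ∑ x ∈ Z i ∪ Y i, g2 G S x := by
        by_contra hcon
        push_neg at hcon
        have := Finset.sum_lt_sum_of_nonempty
          (Finset.univ_nonempty (α := Fin 4))
          (fun i _ => hcon i)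
        omega
      obtain ⟨i, hi⟩ := hex
      have hXM : Z i ∪ Y i ⊆ M :=
        Finset.union_subset ((hZH i).trans hHM)
          (((hYsub i).trans (hTL i)).trans hLM)
      have hXne : (Z i ∪ Y i).Nonempty := by
        by_contra hcon
        rw [Finset.not_nonempty_iff_eq_empty] at hcon
        rw [hcon, Finset.sum_empty] at hi
        have := Finset.card_pos.mpr hMne
        omega
      refine ⟨Z i ∪ Y i, hXM, hXne, ?_, by omega⟩
      intro a ha b hb
      have hmemT : ∀ y ∈ Y i, ∀ z ∈ Z i, ¬ G.Adj y z := by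
        intro y hy
        have := hYsub i hy
        rw [hTdef, Finset.mem_filter] at this
        exact this.2
      rcases Finset.mem_union.mp ha with haZ | haY <;>
        rcases Finset.mem_union.mp hb with hbZ | hbY
      · intro hadj
        have h1 := haZ
        have h2 := hbZ
        rw [hZdef, Finset.mem_filter] at h1 h2
        exact hc hadj (h1.2.trans h2.2.symm)
      · exact fun hadj => hmemT b hbY a haZ (G.adj_symm hadj)
      · exact hmemT a haY b hbZ
      · exact hYind i a haY b hbY

/-- The fuelled game bound. -/
lemma game_bound (c : V → Fin 4) (hc : ∀ {a b : V}, G.Adj a b → c a ≠ c b) :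
    ∀ (n : ℕ) (S : Finset V), S.card ≤ n →
      10 * slowAux G n S ≤ Psi G S := by
  intro n
  induction n with
  | zero =>
    intro S _
    show 10 * 0 ≤ _
    omega
  | succ n ih =>
    intro S hS
    show 10 * ((S.powerset.filter fun M => M.Nonempty).sup fun M =>
        M.card + sInf {k : ℕ | ∃ X : Finset V, X ⊆ M ∧ X.Nonempty ∧
          (∀ x ∈ X, ∀ y ∈ X, ¬ G.Adj x y) ∧ k = slowAux G n (S \ X)}) ≤ Psi G S
    rcases (S.powerset.filter fun M => M.Nonempty).eq_empty_or_nonempty with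
      he | hne
    · rw [he, Finset.sup_empty]
      show 10 * 0 ≤ _
      omega
    · obtain ⟨M, hMmem, hMeq⟩ := Finset.exists_mem_eq_sup _ hne
        (fun M => M.card + sInf {k : ℕ | ∃ X : Finset V, X ⊆ M ∧ X.Nonempty ∧
          (∀ x ∈ X, ∀ y ∈ X, ¬ G.Adj x y) ∧ k = slowAux G n (S \ X)})
      rw [hMeq]
      obtain ⟨hMpow, hMne⟩ := Finset.mem_filter.mp hMmem
      have hMS := Finset.mem_powerset.mp hMpow
      obtain ⟨X, hXM, hXne, hXind, hXb⟩ :=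
        main G c hc S M.card M le_rfl hMS hMne
      have hXS : X ⊆ S := hXM.trans hMS
      have hsinf : sInf {k : ℕ | ∃ X' : Finset V, X' ⊆ M ∧ X'.Nonempty ∧
            (∀ x ∈ X', ∀ y ∈ X', ¬ G.Adj x y) ∧ k = slowAux G n (S \ X')}
          ≤ slowAux G n (S \ X) :=
        Nat.sInf_le ⟨X, hXM, hXne, hXind, rfl⟩
      have hrec : 10 * slowAux G n (S \ X) ≤ Psi G (S \ X) := by
        apply ih
        have h1 : (S \ X).card = S.card - X.card := Finset.card_sdiff_of_subset hXS
        have h2 : 1 ≤ X.card := Finset.card_pos.mpr hXne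
        have h3 : X.card ≤ S.card := Finset.card_le_card hXS
        omega
      have hdrop := drop G S X hXS hXind
      omega

end SlowProof

theorem stmt_14 {V : Type*} [Fintype V] [DecidableEq V] (G : SimpleGraph V)
    [DecidableRel G.Adj] (hcol : G.Colorable 4) :
    (slowCost G Finset.univ : ℝ) ≤
      (∑ v : V, (1 + (1 / 5 : ℝ) * (min (G.degree v) 3 : ℕ))) +
        (3 / 5 : ℝ) * (G.edgeFinset.card : ℝ) := by
  classical
  obtain ⟨col⟩ := hcol
  have hb := SlowProof.game_bound G col (fun {a b} hab => col.valid hab)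
    Finset.univ.card Finset.univ le_rfl
  have hdeg : ∀ v : V, SlowProof.dS G Finset.univ v = G.degree v := by
    intro v
    rw [SlowProof.dS, SimpleGraph.degree, SimpleGraph.neighborFinset_eq_filter]
  have hPsi : SlowProof.Psi G Finset.univ
      = (∑ v : V, (10 + 2 * min (G.degree v) 3)) + 6 * G.edgeFinset.card := by
    rw [SlowProof.Psi]
    calc ∑ v : V, (10 + 2 * min (SlowProof.dS G Finset.univ v) 3
            + 3 * SlowProof.dS G Finset.univ v)
        = ∑ v : V, (10 + 2 * min (G.degree v) 3 + 3 * G.degree v) :=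
          Finset.sum_congr rfl (fun v _ => by rw [hdeg v])
      _ = (∑ v : V, (10 + 2 * min (G.degree v) 3)) + 3 * ∑ v : V, G.degree v := by
          rw [Finset.sum_add_distrib, Finset.mul_sum]
      _ = (∑ v : V, (10 + 2 * min (G.degree v) 3)) + 6 * G.edgeFinset.card := by
          rw [SimpleGraph.sum_degrees_eq_twice_card_edges]
          ring
  have h1 : 10 * slowCost G Finset.univ
      ≤ (∑ v : V, (10 + 2 * min (G.degree v) 3)) + 6 * G.edgeFinset.card := by
    rw [← hPsi]
    exact hb
  have h2 : (10:ℝ) * (slowCost G Finset.univ : ℝ)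
      ≤ (∑ v : V, ((10:ℝ) + 2 * min (G.degree v : ℝ) 3))
        + 6 * (G.edgeFinset.card : ℝ) := by
    have := (Nat.cast_le (α := ℝ)).mpr h1
    push_cast at this
    convert this using 2
  have h3 : ∑ v : V, ((10:ℝ) + 2 * min (G.degree v : ℝ) 3)
      = 10 * ∑ v : V, (1 + (1 / 5 : ℝ) * min (G.degree v : ℝ) 3) := by
    rw [Finset.mul_sum]
    exact Finset.sum_congr rfl (fun v _ => by ring)
  have h4 : (∑ v : V, (1 + (1 / 5 : ℝ) * (min (G.degree v) 3 : ℕ)))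
      = ∑ v : V, (1 + (1 / 5 : ℝ) * min (G.degree v : ℝ) 3) := by
    refine Finset.sum_congr rfl (fun v _ => ?_)
    congr 1
    congr 1
    push_cast
    ring
  rw [h4]
  rw [h3] at h2
  linarith
end

section
/- Let G be a finite simple graph with vertex set V, and let Φ be a real-valued function on subsets of V with Φ(∅) = 0. Suppose that for every S ⊆ V and every nonempty M ⊆ S there exists a set X ⊆ M that is independent in G and satisfies |M| ≤ Φ(S) − Φ(S∖X). Then ŝ(G[S]) ≤ Φ(S) for every S ⊆ V; in particular, the sum-color cost satisfies ŝ(G) ≤ Φ(V). -/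
open Finset

lemma slowAux_le_s15 {V : Type*} [DecidableEq V] (G : SimpleGraph V)
    (Φ : Finset V → ℝ) (hempty : Φ ∅ = 0)
    (hstep : ∀ S : Finset V, ∀ M ⊆ S, M.Nonempty →
      ∃ X ⊆ M, (∀ x ∈ X, ∀ y ∈ X, ¬ G.Adj x y) ∧
        (M.card : ℝ) ≤ Φ S - Φ (S \ X)) :
    ∀ n (S : Finset V), S.card ≤ n → (slowAux G n S : ℝ) ≤ Φ S := by
  intro n
  induction n with
  | zero =>
      intro S hS
      have : S = ∅ := Finset.card_eq_zero.mp (Nat.le_zero.mp hS)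
      subst this
      simp [slowAux, hempty]
  | succ n ih =>
      intro S hS
      rw [slowAux]
      set F := S.powerset.filter fun M => M.Nonempty with hF
      rcases F.eq_empty_or_nonempty with hFe | hFne
      · have hSe : S = ∅ := by
          by_contra h
          have : S ∈ F := by
            simp [hF, Finset.mem_filter, Finset.nonempty_iff_ne_empty, h]
          simp [hFe] at this
        rw [hFe]
        simp [hSe, hempty]
      · obtain ⟨M, hMF, hsup⟩ := Finset.exists_mem_eq_sup F hFne
          (fun M => M.card + sInf {k : ℕ | ∃ X : Finset V, X ⊆ M ∧ X.Nonempty ∧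
            (∀ x ∈ X, ∀ y ∈ X, ¬ G.Adj x y) ∧ k = slowAux G n (S \ X)})
        rw [hsup]
        simp only [hF, Finset.mem_filter, Finset.mem_powerset] at hMF
        obtain ⟨hMS, hMne⟩ := hMF
        obtain ⟨X, hXM, hind, hle⟩ := hstep S M hMS hMne
        have hXne : X.Nonempty := by
          rcases X.eq_empty_or_nonempty with h | h
          · exfalso
            rw [h, Finset.sdiff_empty, sub_self] at hle
            have : (1 : ℝ) ≤ (M.card : ℝ) := by
              exact_mod_cast Nat.one_le_iff_ne_zero.mpr
                (Finset.card_ne_zero_of_mem hMne.choose_spec)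
            linarith
          · exact h
        have hXS : X ⊆ S := hXM.trans hMS
        have hcard : (S \ X).card ≤ n := by
          have h1 : (S \ X).card = S.card - X.card := Finset.card_sdiff_of_subset hXS
          have h2 : 1 ≤ X.card := Finset.card_pos.mpr hXne
          omega
        have hmem : slowAux G n (S \ X) ∈
            {k : ℕ | ∃ X' : Finset V, X' ⊆ M ∧ X'.Nonempty ∧
              (∀ x ∈ X', ∀ y ∈ X', ¬ G.Adj x y) ∧ k = slowAux G n (S \ X')} :=
          ⟨X, hXM, hXne, hind, rfl⟩
        have hinf : sInf {k : ℕ | ∃ X' : Finset V, X' ⊆ M ∧ X'.Nonempty ∧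
              (∀ x ∈ X', ∀ y ∈ X', ¬ G.Adj x y) ∧ k = slowAux G n (S \ X')}
            ≤ slowAux G n (S \ X) := Nat.sInf_le hmem
        have hih : (slowAux G n (S \ X) : ℝ) ≤ Φ (S \ X) := ih (S \ X) hcard
        calc ((M.card + sInf {k : ℕ | ∃ X' : Finset V, X' ⊆ M ∧ X'.Nonempty ∧
              (∀ x ∈ X', ∀ y ∈ X', ¬ G.Adj x y) ∧ k = slowAux G n (S \ X')} : ℕ) : ℝ)
            ≤ (M.card : ℝ) + (slowAux G n (S \ X) : ℝ) := by
              exact_mod_cast Nat.add_le_add_left hinf M.card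
          _ ≤ (Φ S - Φ (S \ X)) + Φ (S \ X) := by linarith
          _ = Φ S := by ring

theorem stmt_15 {V : Type*} [Fintype V] [DecidableEq V] (G : SimpleGraph V)
    (Φ : Finset V → ℝ) (hempty : Φ ∅ = 0)
    (hstep : ∀ S : Finset V, ∀ M ⊆ S, M.Nonempty →
      ∃ X ⊆ M, (∀ x ∈ X, ∀ y ∈ X, ¬ G.Adj x y) ∧
        (M.card : ℝ) ≤ Φ S - Φ (S \ X)) :
    (∀ S : Finset V, (slowCost G S : ℝ) ≤ Φ S) ∧
      (slowCost G Finset.univ : ℝ) ≤ Φ Finset.univ := by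
  have h : ∀ S : Finset V, (slowCost G S : ℝ) ≤ Φ S := fun S =>
    slowAux_le_s15 G Φ hempty hstep S.card S le_rfl
  exact ⟨h, h _⟩
end

section
/- Let G be a k-colorable finite simple graph and let M ⊆ V(G) be such that the induced subgraph G[M] is connected. Let T be the set of vertices of M that lie on no cycle of G[M]. Then G[M] has a proper coloring with k colors such that for every connected component C of G[T] there are two colors a, b with the property that every vertex of C, and every vertex of M having a neighbor in C, receives color a or color b. -/
open Finset

/-- The graph on the same vertex set whose edges are the edges of `G` with
both endpoints in `T`; its nontrivial connected components and its cycles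
are those of the induced subgraph `G[T]`. -/
def SimpleGraph.restrictTo {W : Type*} (G : SimpleGraph W) (T : Set W) :
    SimpleGraph W where
  Adj u v := G.Adj u v ∧ u ∈ T ∧ v ∈ T
  symm := by
    constructor
    intro u v h
    exact ⟨h.1.symm, h.2.2, h.2.1⟩
  loopless := by
    constructor
    intro v h
    exact G.irrefl h.1

/-- A vertex lies on a cycle of a graph if some cycle of that graph passes
through it. -/
def LiesOnCycle {W : Type*} (H : SimpleGraph W) (v : W) : Prop :=
  ∃ (u : W) (c : H.Walk u u), c.IsCycle ∧ v ∈ c.support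

namespace SimpleGraph
variable {V : Type*} (G : SimpleGraph V)

lemma restrictTo_mono {S S' : Set V} (h : S ⊆ S') : G.restrictTo S ≤ G.restrictTo S' := by
  intro u v ha
  exact ⟨ha.1, h ha.2.1, h ha.2.2⟩

lemma restrictTo_support_subset {S : Set V} {u v : V} (p : (G.restrictTo S).Walk u v)
    (hv : v ∈ S) : ∀ w ∈ p.support, w ∈ S := by
  induction p with
  | nil => intro w hw; simp only [Walk.support_nil, List.mem_singleton] at hw; subst hw; exact hv
  | cons h q ih =>
    intro w hw
    rw [Walk.support_cons, List.mem_cons] at hw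
    rcases hw with rfl | hw
    · exact h.2.1
    · exact ih hv w hw

lemma restrictTo_transfer_edges {S S' : Set V} {u v : V} (p : (G.restrictTo S).Walk u v)
    (hsupp : ∀ w ∈ p.support, w ∈ S') : ∀ e ∈ p.edges, e ∈ (G.restrictTo S').edgeSet := by
  intro e
  induction e using Sym2.ind with
  | _ a b =>
    intro he
    exact ⟨(p.adj_of_mem_edges he).1, hsupp a (p.fst_mem_support_of_mem_edges he),
      hsupp b (p.snd_mem_support_of_mem_edges he)⟩

lemma restrictTo_reachable_transfer {S S' : Set V} {u v : V} (p : (G.restrictTo S).Walk u v)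
    (hsupp : ∀ w ∈ p.support, w ∈ S') : (G.restrictTo S').Reachable u v :=
  ⟨p.transfer _ (G.restrictTo_transfer_edges p hsupp)⟩

lemma restrictTo_cycle_transfer {S S' : Set V} {u : V} (c : (G.restrictTo S).Walk u u)
    (hc : c.IsCycle) (hsupp : ∀ w ∈ c.support, w ∈ S') :
    ∃ c' : (G.restrictTo S').Walk u u, c'.IsCycle ∧ c'.support = c.support :=
  ⟨c.transfer _ (G.restrictTo_transfer_edges c hsupp), hc.transfer _, c.support_transfer _⟩

lemma liesOnCycle_mono {S S' : Set V} (hS : S ⊆ S') {v : V}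
    (h : LiesOnCycle (G.restrictTo S) v) : LiesOnCycle (G.restrictTo S') v := by
  obtain ⟨u, c, hc, hv⟩ := h
  exact ⟨u, c.transfer _ (fun e he =>
      edgeSet_mono (G.restrictTo_mono hS) (c.edges_subset_edgeSet he)),
    hc.transfer _, by rwa [Walk.support_transfer]⟩

lemma reachable_of_mem_support [DecidableEq V] {H : SimpleGraph V} {u v w : V} (p : H.Walk u v)
    (hw : w ∈ p.support) : H.Reachable u w :=
  ⟨p.takeUntil w hw⟩

lemma mem_support_rotate_subset [DecidableEq V] {H : SimpleGraph V} {u v : V} (c : H.Walk v v)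
    (h : u ∈ c.support) : ∀ w ∈ (c.rotate u h).support, w ∈ c.support := by
  intro w hw
  have hrot := c.support_rotate u h
  rw [(c.rotate u h).support_eq_cons, List.mem_cons] at hw
  rcases hw with rfl | hw
  · exact h
  · have : w ∈ c.support.tail := hrot.mem_iff.1 hw
    rw [c.support_eq_cons]
    exact List.mem_cons_of_mem _ this

/-- The key cycle construction: if `y ∈ M` lies on no cycle of `G[M]` then two distinct
neighbors of `y` in `M` cannot be connected in `G[M \ {y}]`. -/
lemma no_reconnect [DecidableEq V] {M : Finset V} {y : V} (hyM : y ∈ M)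
    (hyC : ¬ LiesOnCycle (G.restrictTo (↑M : Set V)) y) {n1 n2 : V}
    (h1 : G.Adj y n1) (h2 : G.Adj y n2) (hn1 : n1 ∈ M) (hn2 : n2 ∈ M) (hne : n1 ≠ n2)
    (hr : (G.restrictTo (↑(M.erase y) : Set V)).Reachable n1 n2) : False := by
  obtain ⟨w⟩ := hr
  obtain ⟨p, hp⟩ := w.toPath
  have hn2e : n2 ∈ (↑(M.erase y) : Set V) := by
    simp only [coe_erase, Set.mem_diff, Set.mem_singleton_iff]
    exact ⟨hn2, h2.ne'⟩
  have hsupp : ∀ w' ∈ p.support, w' ∈ (↑M : Set V) ∧ w' ≠ y := by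
    intro w' hw'
    have := G.restrictTo_support_subset p hn2e w' hw'
    simp only [coe_erase, Set.mem_diff, Set.mem_singleton_iff] at this
    exact ⟨this.1, this.2⟩
  have hy : y ∉ p.support := fun hmem => (hsupp y hmem).2 rfl
  -- transfer to G[M]
  set q : (G.restrictTo (↑M : Set V)).Walk n1 n2 :=
    p.transfer _ (G.restrictTo_transfer_edges p (fun w' hw' => (hsupp w' hw').1)) with hq
  have hqsupp : q.support = p.support := p.support_transfer _
  have hqp : q.IsPath := hp.transfer _
  have ha1 : (G.restrictTo (↑M : Set V)).Adj y n1 := ⟨h1, hyM, hn1⟩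
  have ha2 : (G.restrictTo (↑M : Set V)).Adj n2 y := ⟨h2.symm, hn2, hyM⟩
  have hyq : y ∉ q.support := by rwa [hqsupp]
  have hcyc : (Walk.cons ha1 (q.concat ha2)).IsCycle := by
    rw [Walk.cons_isCycle_iff]
    constructor
    · rw [← Walk.isPath_reverse_iff, Walk.reverse_concat, Walk.cons_isPath_iff]
      refine ⟨by rwa [Walk.isPath_reverse_iff], ?_⟩
      rw [Walk.support_reverse, List.mem_reverse]
      exact hyq
    · rw [Walk.edges_concat, List.concat_eq_append, List.mem_append, List.mem_singleton]
      rintro (hmem | heq)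
      · exact hyq (q.fst_mem_support_of_mem_edges hmem)
      · rw [Sym2.eq_iff] at heq
        rcases heq with ⟨h', _⟩ | ⟨_, h''⟩
        · exact h2.ne' h'.symm
        · exact hne h''
  exact hyC ⟨y, _, hcyc, Walk.start_mem_support _⟩

end SimpleGraph

open SimpleGraph in
abbrev TSet {V : Type*} [Fintype V] [DecidableEq V] (G : SimpleGraph V) (M : Finset V) : Set V :=
  {v : V | v ∈ M ∧ ¬ LiesOnCycle (G.restrictTo ↑M) v}

open SimpleGraph in
lemma main_lemma_s16 {V : Type*} [Fintype V] [DecidableEq V] (G : SimpleGraph V) (k : ℕ)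
    (hcol : G.Colorable k) :
    ∀ (N : ℕ) (M : Finset V), M.card ≤ N →
      (∀ u ∈ M, ∀ v ∈ M, (G.restrictTo (↑M : Set V)).Reachable u v) →
      ∃ f : V → Fin k,
        (∀ u ∈ M, ∀ v ∈ M, G.Adj u v → f u ≠ f v) ∧
        ∀ x ∈ TSet G M, ∃ a b : Fin k,
          (∀ y ∈ TSet G M, (G.restrictTo (TSet G M)).Reachable x y → (f y = a ∨ f y = b)) ∧
          (∀ z ∈ M, (∃ y ∈ TSet G M, (G.restrictTo (TSet G M)).Reachable x y ∧ G.Adj z y) →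
            (f z = a ∨ f z = b)) := by
  classical
  have C := hcol.some
  intro N
  induction N with
  | zero =>
    intro M hcard _
    refine ⟨fun v => C v, fun u _ v _ h => C.valid h, fun x hx => absurd hx.1 ?_⟩
    simp [Finset.card_eq_zero.1 (Nat.le_zero.1 hcard)]
  | succ N ih =>
    intro M hcard hpre
    by_cases hT : ∃ y₀, y₀ ∈ TSet G M
    case neg => exact ⟨fun v => C v, fun u _ v _ h => C.valid h, fun x hx => absurd ⟨x, hx⟩ hT⟩
    obtain ⟨y, hyT⟩ := hT
    have hyM : y ∈ M := hyT.1
    have hyC : ¬ LiesOnCycle (G.restrictTo (↑M : Set V)) y := hyT.2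
    by_cases hN : ∃ n, G.Adj y n ∧ n ∈ M
    case neg =>
      have hsing : ∀ v ∈ M, v = y := by
        intro v hv
        by_contra hvy
        obtain ⟨w⟩ := hpre y hyM v hv
        obtain ⟨p, hp⟩ := w.toPath
        cases p with
        | nil => exact hvy rfl
        | cons h q => exact hN ⟨_, h.1, Finset.mem_coe.1 h.2.2⟩
      refine ⟨fun v => C v, fun u _ v _ h => C.valid h, ?_⟩
      intro x hx
      refine ⟨C y, C y, ?_, ?_⟩
      · intro y' hy' _
        left; rw [hsing y' hy'.1]
      · rintro z hz ⟨y', hy', _, hadj⟩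
        have : G.Adj y y := by rwa [hsing z hz, hsing y' hy'.1] at hadj
        exact absurd this (G.irrefl (v := y))
    obtain ⟨n₀, hn₀a, hn₀M⟩ := hN
    set a := C y with ha
    set b := C n₀ with hb
    have hab : a ≠ b := C.valid hn₀a
    set R := G.restrictTo (↑(M.erase y) : Set V) with hR
    set Mn : V → Finset V := fun n => (M.erase y).filter (fun v => R.Reachable n v) with hMndef
    have hcoe : ∀ v, v ∈ (↑(M.erase y) : Set V) ↔ (v ∈ M ∧ v ≠ y) := by
      intro v
      simp [Finset.mem_erase, and_comm]
    have hmemMn : ∀ n v, v ∈ Mn n ↔ (v ∈ M ∧ v ≠ y ∧ R.Reachable n v) := by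
      intro n v
      simp only [hMndef, Finset.mem_filter, Finset.mem_erase]
      tauto
    have hMnM : ∀ n, ∀ v ∈ Mn n, v ∈ M := fun n v hv => ((hmemMn n v).1 hv).1
    have hMny : ∀ n, ∀ v ∈ Mn n, v ≠ y := fun n v hv => ((hmemMn n v).1 hv).2.1
    have hMnr : ∀ n, ∀ v ∈ Mn n, R.Reachable n v := fun n v hv => ((hmemMn n v).1 hv).2.2
    have hMnsub : ∀ n, Mn n ⊆ M.erase y := by
      intro n v hv
      exact Finset.mem_erase.2 ⟨hMny n v hv, hMnM n v hv⟩
    have F1 : ∀ n, G.Adj y n → n ∈ M → n ∈ Mn n :=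
      fun n h hM => (hmemMn n n).2 ⟨hM, h.ne', SimpleGraph.Reachable.refl n⟩
    have F2 : ∀ n, ∀ v ∈ Mn n, ∀ w, G.Adj v w → w ∈ M → w ≠ y → w ∈ Mn n := by
      intro n v hv w hadj hwM hwy
      refine (hmemMn n w).2 ⟨hwM, hwy, (hMnr n v hv).trans (SimpleGraph.Adj.reachable ⟨hadj, ?_, ?_⟩)⟩
      · exact (hcoe v).2 ⟨hMnM n v hv, hMny n v hv⟩
      · exact (hcoe w).2 ⟨hwM, hwy⟩
    have F3 : ∀ n1 n2, G.Adj y n1 → n1 ∈ M → G.Adj y n2 → n2 ∈ M →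
        ∀ v, v ∈ Mn n1 → v ∈ Mn n2 → n1 = n2 := by
      intro n1 n2 h1 hM1 h2 hM2 v hv1 hv2
      by_contra hne
      exact G.no_reconnect hyM hyC h1 h2 hM1 hM2 hne ((hMnr _ _ hv1).trans (hMnr _ _ hv2).symm)
    have hpart : ∀ v : V, ∃ n : V, v ∈ M.erase y → (G.Adj y n ∧ n ∈ M ∧ v ∈ Mn n) := by
      intro v
      by_cases hv : v ∈ M.erase y
      · rw [Finset.mem_erase] at hv
        obtain ⟨w⟩ := hpre y hyM v hv.2
        obtain ⟨p, hp⟩ := w.toPath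
        cases p with
        | nil => exact absurd rfl hv.1
        | cons h q =>
          rename_i m
          rw [Walk.cons_isPath_iff] at hp
          have hqsupp : ∀ w' ∈ q.support, w' ∈ (↑(M.erase y) : Set V) := by
            intro w' hw'
            refine (hcoe w').2 ⟨Finset.mem_coe.1
              (G.restrictTo_support_subset q (Finset.mem_coe.2 hv.2) w' hw'), ?_⟩
            rintro rfl
            exact hp.2 hw'
          exact ⟨m, fun _ => ⟨h.1, Finset.mem_coe.1 h.2.2,
            (hmemMn m v).2 ⟨hv.2, hv.1, G.restrictTo_reachable_transfer q hqsupp⟩⟩⟩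
      · exact ⟨y, fun h => absurd h hv⟩
    choose nv hnv0 using hpart
    have hcard' : ∀ n, (Mn n).card ≤ N := by
      intro n
      have h1 : (Mn n).card ≤ (M.erase y).card := Finset.card_le_card (hMnsub n)
      have h2 : (M.erase y).card = M.card - 1 := Finset.card_erase_of_mem hyM
      have h3 : 1 ≤ M.card := Finset.card_pos.2 ⟨y, hyM⟩
      omega
    have hprecon : ∀ n, ∀ u ∈ Mn n, ∀ v ∈ Mn n,
        (G.restrictTo (↑(Mn n) : Set V)).Reachable u v := by
      intro n u hu v hv
      obtain ⟨w⟩ := (hMnr n u hu).symm.trans (hMnr n v hv)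
      refine G.restrictTo_reachable_transfer w ?_
      intro s hs
      have hsE := (hcoe s).1
        (G.restrictTo_support_subset w (Finset.mem_coe.2 (hMnsub n hv)) s hs)
      exact Finset.mem_coe.2 ((hmemMn n s).2
        ⟨hsE.1, hsE.2, (hMnr n u hu).trans (SimpleGraph.reachable_of_mem_support w hs)⟩)
    have key : ∀ n : V, ∃ fn : V → Fin k, (G.Adj y n ∧ n ∈ M) →
        ((∀ u ∈ Mn n, ∀ v ∈ Mn n, G.Adj u v → fn u ≠ fn v) ∧
         ∀ x ∈ TSet G (Mn n), ∃ a' b' : Fin k,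
           (∀ y' ∈ TSet G (Mn n), (G.restrictTo (TSet G (Mn n))).Reachable x y' →
             (fn y' = a' ∨ fn y' = b')) ∧
           (∀ z ∈ Mn n, (∃ y' ∈ TSet G (Mn n),
               (G.restrictTo (TSet G (Mn n))).Reachable x y' ∧ G.Adj z y') →
             (fn z = a' ∨ fn z = b'))) := by
      intro n
      by_cases h : G.Adj y n ∧ n ∈ M
      · obtain ⟨fn, hfn⟩ := ih (Mn n) (hcard' n) (hprecon n)
        exact ⟨fn, fun _ => hfn⟩
      · exact ⟨fun _ => a, fun h' => absurd h' h⟩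
    choose F hF using key
    -- F6 : T localizes
    have F6 : ∀ n, G.Adj y n → n ∈ M → ∀ v ∈ Mn n,
        (v ∈ TSet G M ↔ v ∈ TSet G (Mn n)) := by
      intro n h1 h2 v hv
      constructor
      · rintro ⟨hvM, hvC⟩
        refine ⟨hv, fun hlies => hvC ?_⟩
        exact G.liesOnCycle_mono
          (fun w hw => Finset.mem_coe.2 (hMnM n w (Finset.mem_coe.1 hw))) hlies
      · rintro ⟨hvMn, hvC⟩
        refine ⟨hMnM n v hv, fun hlies => hvC ?_⟩
        obtain ⟨u, c, hc, hvsupp⟩ := hlies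
        have hc2 := hc.rotate hvsupp
        have hsub2 := SimpleGraph.mem_support_rotate_subset c hvsupp
        have hyc : y ∉ c.support := fun hy' => hyC ⟨u, c, hc, hy'⟩
        have hsuppM : ∀ w ∈ (c.rotate v hvsupp).support, w ∈ (↑(M.erase y) : Set V) := by
          intro w hw
          have hwM := G.restrictTo_support_subset (c.rotate v hvsupp)
            (Finset.mem_coe.2 (hMnM n v hv)) w hw
          exact (hcoe w).2 ⟨Finset.mem_coe.1 hwM, fun hwy => hyc (hwy ▸ hsub2 w hw)⟩
        obtain ⟨c3, hc3, hc3supp⟩ := G.restrictTo_cycle_transfer (c.rotate v hvsupp) hc2 hsuppM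
        have hsuppMn : ∀ w ∈ c3.support, w ∈ (↑(Mn n) : Set V) := by
          intro w hw
          have hrw : R.Reachable v w := SimpleGraph.reachable_of_mem_support c3 hw
          have hw2 : w ∈ (c.rotate v hvsupp).support := hc3supp ▸ hw
          have hwE := (hcoe w).1 (hsuppM w hw2)
          exact Finset.mem_coe.2 ((hmemMn n w).2 ⟨hwE.1, hwE.2, (hMnr n v hv).trans hrw⟩)
        obtain ⟨c4, hc4, _⟩ := G.restrictTo_cycle_transfer c3 hc3 hsuppMn
        exact ⟨v, c4, hc4, Walk.start_mem_support _⟩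
    -- choose the two special colors for each attaching component
    have key2 : ∀ n : V, ∃ AB : Fin k × Fin k, (G.Adj y n ∧ n ∈ M ∧ n ∈ TSet G M) →
        ((∀ y' ∈ TSet G (Mn n), (G.restrictTo (TSet G (Mn n))).Reachable n y' →
            (F n y' = AB.1 ∨ F n y' = AB.2)) ∧
         (∀ z ∈ Mn n, (∃ y' ∈ TSet G (Mn n),
             (G.restrictTo (TSet G (Mn n))).Reachable n y' ∧ G.Adj z y') →
           (F n z = AB.1 ∨ F n z = AB.2))) := by
      intro n
      by_cases h : G.Adj y n ∧ n ∈ M ∧ n ∈ TSet G M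
      · obtain ⟨a', b', h1, h2⟩ := (hF n ⟨h.1, h.2.1⟩).2 n
          ((F6 n h.1 h.2.1 n (F1 n h.1 h.2.1)).1 h.2.2)
        exact ⟨(a', b'), fun _ => ⟨h1, h2⟩⟩
      · exact ⟨(a, a), fun h' => absurd h' h⟩
    choose AB hAB using key2
    set cn : V → Fin k := fun n => if F n n = (AB n).1 then (AB n).2 else (AB n).1 with hcn
    set σ : V → Equiv.Perm (Fin k) := fun n =>
      if n ∈ TSet G M ∧ (AB n).1 ≠ (AB n).2 then
        (Equiv.swap (F n n) b).trans (Equiv.swap (Equiv.swap (F n n) b (cn n)) a)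
      else Equiv.swap (F n n) b with hσ
    have hFnn : ∀ n, G.Adj y n → n ∈ M → n ∈ TSet G M →
        (F n n = (AB n).1 ∨ F n n = (AB n).2) := by
      intro n h1 h2 h3
      exact (hAB n ⟨h1, h2, h3⟩).1 n ((F6 n h1 h2 n (F1 n h1 h2)).1 h3)
        (SimpleGraph.Reachable.refl n)
    have hcnne : ∀ n, (F n n = (AB n).1 ∨ F n n = (AB n).2) → (AB n).1 ≠ (AB n).2 →
        cn n ≠ F n n := by
      intro n hmem hne
      simp only [hcn]
      by_cases he : F n n = (AB n).1
      · rw [if_pos he, he]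
        exact hne.symm
      · rw [if_neg he]
        rcases hmem with hm | hm
        · exact absurd hm he
        · rw [hm]; exact hne
    have hcmem : ∀ n, (F n n = (AB n).1 ∨ F n n = (AB n).2) →
        ∀ c : Fin k, (c = (AB n).1 ∨ c = (AB n).2) → (c = F n n ∨ c = cn n) := by
      intro n hmem c hc
      simp only [hcn]
      by_cases he : F n n = (AB n).1
      · rw [if_pos he]
        rcases hc with rfl | rfl
        · left; exact he.symm
        · right; rfl
      · rw [if_neg he]
        rcases hc with rfl | rfl
        · right; rfl
        · left
          rcases hmem with hm | hm
          · exact absurd hm he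
          · exact hm.symm
    have P1 : ∀ n, G.Adj y n → n ∈ M → σ n (F n n) = b := by
      intro n h1 h2
      by_cases h3 : n ∈ TSet G M ∧ (AB n).1 ≠ (AB n).2
      · simp only [hσ, if_pos h3, Equiv.trans_apply, Equiv.swap_apply_left]
        refine Equiv.swap_apply_of_ne_of_ne ?_ hab.symm
        intro he
        have : F n n = cn n := (Equiv.swap (F n n) b).injective
          (by rw [Equiv.swap_apply_left]; exact he)
        exact hcnne n (hFnn n h1 h2 h3.1) h3.2 this.symm
      · simp only [hσ, if_neg h3, Equiv.swap_apply_left]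
    have P2 : ∀ n, G.Adj y n → n ∈ M → n ∈ TSet G M →
        ∀ c : Fin k, (c = (AB n).1 ∨ c = (AB n).2) → (σ n c = a ∨ σ n c = b) := by
      intro n h1 h2 h3 c hc
      rcases hcmem n (hFnn n h1 h2 h3) c hc with rfl | rfl
      · right; exact P1 n h1 h2
      · by_cases h4 : n ∈ TSet G M ∧ (AB n).1 ≠ (AB n).2
        · left
          simp only [hσ, if_pos h4, Equiv.trans_apply, Equiv.swap_apply_left]
        · right
          have h5 : (AB n).1 = (AB n).2 := by
            by_contra h5
            exact h4 ⟨h3, h5⟩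
          have h6 : cn n = F n n := by
            simp only [hcn]
            rcases hFnn n h1 h2 h3 with hm | hm
            · rw [if_pos hm, hm]
              exact h5.symm
            · by_cases he : F n n = (AB n).1
              · rw [if_pos he]
                exact hm.symm
              · rw [if_neg he]
                exact h5.trans hm.symm
          rw [h6]
          exact P1 n h1 h2
    set f : V → Fin k := fun v => if v ∈ M.erase y then σ (nv v) (F (nv v) v) else a with hf
    have hfy : f y = a := by
      simp only [hf, if_neg (fun h => (Finset.mem_erase.1 h).1 rfl)]
    have KC : ∀ n, G.Adj y n → n ∈ M → ∀ v ∈ Mn n, f v = σ n (F n v) := by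
      intro n h1 h2 v hv
      have hv' : v ∈ M.erase y := hMnsub n hv
      obtain ⟨hnv1, hnv2, hnv3⟩ := hnv0 v hv'
      have e : nv v = n := F3 (nv v) n hnv1 hnv2 h1 h2 v hnv3 hv
      simp only [hf, if_pos hv', e]
    have hproper : ∀ u ∈ M, ∀ v ∈ M, G.Adj u v → f u ≠ f v := by
      intro u hu v hv hadj
      by_cases huy : u = y
      · subst huy
        rw [hfy, KC v hadj hv v (F1 v hadj hv), P1 v hadj hv]
        exact hab
      · by_cases hvy : v = y
        · subst hvy
          rw [hfy, KC u hadj.symm hu u (F1 u hadj.symm hu), P1 u hadj.symm hu]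
          exact hab.symm
        · have hu' : u ∈ M.erase y := Finset.mem_erase.2 ⟨huy, hu⟩
          obtain ⟨h1, h2, h3⟩ := hnv0 u hu'
          have hvMn : v ∈ Mn (nv u) := F2 (nv u) u h3 v hadj hv hvy
          rw [KC (nv u) h1 h2 u h3, KC (nv u) h1 h2 v hvMn]
          intro he
          exact (hF (nv u) ⟨h1, h2⟩).1 u h3 v hvMn hadj ((σ (nv u)).injective he)
    -- the walk-localization lemma
    have LW : ∀ n, G.Adj y n → n ∈ M → ∀ s t : V, s ∈ Mn n → s ∈ TSet G M →
        ∀ (p : (G.restrictTo (TSet G M)).Walk s t), y ∉ p.support →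
        (t ∈ Mn n ∧ t ∈ TSet G (Mn n) ∧ (G.restrictTo (TSet G (Mn n))).Reachable s t) := by
      intro n h1 h2 s t hsMn hsT p hyp
      have hsupp : ∀ w ∈ p.support, w ∈ TSet G (Mn n) ∧ w ∈ Mn n := by
        intro w hw
        have hwT : w ∈ TSet G M := by
          exact G.restrictTo_support_subset p.reverse hsT w
            (by rw [Walk.support_reverse, List.mem_reverse]; exact hw)
        have hwMn : w ∈ Mn n := by
          have hpresupp : ∀ w' ∈ (p.takeUntil w hw).support,
              w' ∈ (↑(M.erase y) : Set V) := by
            intro w' hw'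
            have hw's : w' ∈ p.support := p.support_takeUntil_subset hw hw'
            have hw'T : w' ∈ TSet G M := G.restrictTo_support_subset p.reverse hsT w'
              (by rw [Walk.support_reverse, List.mem_reverse]; exact hw's)
            exact (hcoe w').2 ⟨hw'T.1, fun he => hyp (he ▸ hw's)⟩
          have hrs : R.Reachable s w :=
            G.restrictTo_reachable_transfer (p.takeUntil w hw) hpresupp
          exact (hmemMn n w).2 ⟨hwT.1, fun he => hyp (he ▸ hw), (hMnr n s hsMn).trans hrs⟩
        exact ⟨(F6 n h1 h2 w hwMn).1 hwT, hwMn⟩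
      have ht := hsupp t p.end_mem_support
      exact ⟨ht.2, ht.1, G.restrictTo_reachable_transfer p (fun w hw => (hsupp w hw).1)⟩
    have F8 : ∀ y', (G.restrictTo (TSet G M)).Reachable y y' →
        (y' = y ∨ ∃ n, G.Adj y n ∧ n ∈ M ∧ n ∈ TSet G M ∧ y' ∈ Mn n ∧
          y' ∈ TSet G (Mn n) ∧ (G.restrictTo (TSet G (Mn n))).Reachable n y') := by
      intro y' hr
      obtain ⟨w⟩ := hr
      obtain ⟨p, hp⟩ := w.toPath
      cases p with
      | nil => exact Or.inl rfl
      | cons h q =>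
        rename_i m
        rw [Walk.cons_isPath_iff] at hp
        right
        have hmT : m ∈ TSet G M := h.2.2
        have hadj : G.Adj y m := h.1
        have hmM : m ∈ M := hmT.1
        obtain ⟨k1, k2, k3⟩ := LW m hadj hmM m y' (F1 m hadj hmM) hmT q hp.2
        exact ⟨m, hadj, hmM, hmT, k1, k2, k3⟩
    refine ⟨f, hproper, ?_⟩
    intro x hx
    by_cases hxy : (G.restrictTo (TSet G M)).Reachable x y
    · refine ⟨a, b, ?_, ?_⟩
      · intro y' hy'T hr
        rcases F8 y' (hxy.symm.trans hr) with heq | ⟨n, h1, h2, h3, h4, h5, h6⟩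
        · left; rw [heq]; exact hfy
        · rw [KC n h1 h2 y' h4]
          exact P2 n h1 h2 h3 _ ((hAB n ⟨h1, h2, h3⟩).1 y' h5 h6)
      · rintro z hz ⟨y', hy'T, hr, hadj⟩
        rcases F8 y' (hxy.symm.trans hr) with heq | ⟨n, h1, h2, h3, h4, h5, h6⟩
        · have hzv : G.Adj y z := (heq ▸ hadj.symm : G.Adj y z)
          rw [KC z hzv hz z (F1 z hzv hz), P1 z hzv hz]
          right; rfl
        · by_cases hzy : z = y
          · subst hzy; left; exact hfy
          · have hzMn : z ∈ Mn n := F2 n y' h4 z hadj.symm hz hzy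
            rw [KC n h1 h2 z hzMn]
            exact P2 n h1 h2 h3 _ ((hAB n ⟨h1, h2, h3⟩).2 z hzMn ⟨y', h5, h6, hadj⟩)
    · have hxyne : x ≠ y := fun he => hxy (he ▸ SimpleGraph.Reachable.refl x)
      have hx' : x ∈ M.erase y := Finset.mem_erase.2 ⟨hxyne, hx.1⟩
      obtain ⟨h1, h2, h3⟩ := hnv0 x hx'
      have hxTn : x ∈ TSet G (Mn (nv x)) := (F6 (nv x) h1 h2 x h3).1 hx
      obtain ⟨a', b', hc1, hc2⟩ := (hF (nv x) ⟨h1, h2⟩).2 x hxTn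
      refine ⟨σ (nv x) a', σ (nv x) b', ?_, ?_⟩
      · intro y' hy'T hr
        obtain ⟨w⟩ := hr
        obtain ⟨p, hp⟩ := w.toPath
        have hyp : y ∉ p.support := fun hmem => hxy ⟨p.takeUntil y hmem⟩
        obtain ⟨k1, k2, k3⟩ := LW (nv x) h1 h2 x y' h3 hx p hyp
        rw [KC (nv x) h1 h2 y' k1]
        rcases hc1 y' k2 k3 with he | he
        · left; rw [he]
        · right; rw [he]
      · rintro z hz ⟨y', hy'T, hr, hadj⟩
        have hzy : z ≠ y := by
          rintro rfl
          exact hxy (hr.trans (SimpleGraph.Adj.reachable ⟨hadj.symm, hy'T, hyT⟩))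
        obtain ⟨w⟩ := hr
        obtain ⟨p, hp⟩ := w.toPath
        have hyp : y ∉ p.support := fun hmem => hxy ⟨p.takeUntil y hmem⟩
        obtain ⟨k1, k2, k3⟩ := LW (nv x) h1 h2 x y' h3 hx p hyp
        have hzMn : z ∈ Mn (nv x) := F2 (nv x) y' k1 z hadj.symm hz hzy
        rw [KC (nv x) h1 h2 z hzMn]
        rcases hc2 z hzMn ⟨y', k2, k3, hadj⟩ with he | he
        · left; rw [he]
        · right; rw [he]

theorem stmt_16 {V : Type*} [Fintype V] [DecidableEq V] (G : SimpleGraph V)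
    (k : ℕ) (hcol : G.Colorable k) (M : Finset V)
    (hconn : (G.induce (↑M : Set V)).Connected) :
    -- `T` is the set of vertices of `M` lying on no cycle of `G[M]`
    ∀ T : Set V, T = {v : V | v ∈ M ∧ ¬ LiesOnCycle (G.restrictTo ↑M) v} →
    ∃ f : V → Fin k,
      -- `f` is a proper `k`-coloring of `G[M]`
      (∀ u ∈ M, ∀ v ∈ M, G.Adj u v → f u ≠ f v) ∧
      -- for every connected component of `G[T]` (the component of `x ∈ T`):
      ∀ x ∈ T, ∃ a b : Fin k,
        (∀ y ∈ T, (G.restrictTo T).Reachable x y → (f y = a ∨ f y = b)) ∧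
        (∀ z ∈ M, (∃ y ∈ T, (G.restrictTo T).Reachable x y ∧ G.Adj z y) →
          (f z = a ∨ f z = b)) := by
  intro T hT
  subst hT
  have hpre : ∀ u ∈ M, ∀ v ∈ M, (G.restrictTo (↑M : Set V)).Reachable u v := by
    intro u hu v hv
    let φ : G.induce (↑M : Set V) →g G.restrictTo (↑M : Set V) :=
      ⟨Subtype.val, fun {p q} h => ⟨h, p.2, q.2⟩⟩
    obtain ⟨w⟩ := hconn.preconnected ⟨u, Finset.mem_coe.2 hu⟩ ⟨v, Finset.mem_coe.2 hv⟩
    exact ⟨w.map φ⟩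
  obtain ⟨f, h1, h2⟩ := main_lemma_s16 G k hcol M.card M le_rfl hpre
  exact ⟨f, h1, h2⟩
end

section
/- Let G be a finite simple graph, M ⊆ V(G), and let V'_1, V'_2, V'_3, V'_4 be independent sets of G contained in M. For v ∈ V(G) let φ_G(v) = 1 + (1/5)·min(d_G(v), 3), and for an independent set X ⊆ M define u_X(v) = φ_G(v) + (3/5)·d_G(v) − 1 if v ∈ X; u_X(v) = φ_G(v) − φ_{G−X}(v) − 1 if v ∈ M∖X; and u_X(v) = φ_G(v) − φ_{G−X}(v) if v ∉ M, where G − X is the graph obtained from G by deleting the vertices of X. For x ∈ M let u(x) = Σ_{i=1}^{4} u_{V'_i}(x), let c(x) be the number of indices i with x ∈ V'_i, and let s(x) = Σ over neighbors y of x with y ∈ M of c(y). Then u(x) ≥ ((4/5)·d_G(x) + 1)·c(x) + (1/5)·s(x) − 4 if d_G(x) ≤ 3, and u(x) ≥ 4·c(x) − 4 if d_G(x) ≥ 4. -/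
open Finset

variable {V : Type*} [Fintype V] [DecidableEq V]

/-- The vertex potential `φ_G(v) = 1 + (1/5)·min(d_G(v),3)`. -/
noncomputable def phi (G : SimpleGraph V) [DecidableRel G.Adj] (v : V) : ℝ :=
  1 + (1 / 5 : ℝ) * (min (G.degree v) 3 : ℕ)

/-- The vertex potential of `v` in the graph `G − X` obtained by deleting
the vertices of `X`: the degree of `v` there is the number of neighbors of
`v` outside `X`. -/
noncomputable def phiDel (G : SimpleGraph V) [DecidableRel G.Adj]
    (X : Finset V) (v : V) : ℝ :=
  1 + (1 / 5 : ℝ) * (min ((G.neighborFinset v \ X).card) 3 : ℕ)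

/-- The utility contribution `u_X(v)` of vertex `v` for the marked set `M`
and the independent set `X ⊆ M`. -/
noncomputable def utilAt (G : SimpleGraph V) [DecidableRel G.Adj]
    (M X : Finset V) (v : V) : ℝ :=
  if v ∈ X then phi G v + (3 / 5 : ℝ) * (G.degree v : ℝ) - 1
  else if v ∈ M then phi G v - phiDel G X v - 1
  else phi G v - phiDel G X v

theorem stmt_17 (G : SimpleGraph V) [DecidableRel G.Adj]
    (M : Finset V) (Vs : Fin 4 → Finset V)
    (hsub : ∀ i, Vs i ⊆ M)
    (hind : ∀ i, ∀ x ∈ Vs i, ∀ y ∈ Vs i, ¬ G.Adj x y)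
    -- `c x` is the number of indices `i` with `x ∈ V'_i`
    (c : V → ℕ) (hc : ∀ x, c x = (Finset.univ.filter fun i : Fin 4 => x ∈ Vs i).card)
    -- `s x` is the sum of `c y` over neighbors `y` of `x` with `y ∈ M`
    (s : V → ℕ) (hs : ∀ x, s x = ∑ y ∈ G.neighborFinset x ∩ M, c y)
    -- `u x` is the total utility of `x`
    (u : V → ℝ) (hu : ∀ x, u x = ∑ i : Fin 4, utilAt G M (Vs i) x)
    (x : V) (hx : x ∈ M) :
    (G.degree x ≤ 3 →
      ((4 / 5 : ℝ) * G.degree x + 1) * c x + (1 / 5 : ℝ) * s x - 4 ≤ u x) ∧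
    (4 ≤ G.degree x → 4 * (c x : ℝ) - 4 ≤ u x) := by
  have hdeg : (G.neighborFinset x).card = G.degree x := G.card_neighborFinset_eq_degree x
  have ha0 : ∀ i, x ∈ Vs i → G.neighborFinset x ∩ Vs i = ∅ := by
    intro i hxi
    rw [Finset.eq_empty_iff_forall_notMem]
    intro y hy
    rw [Finset.mem_inter, SimpleGraph.mem_neighborFinset] at hy
    exact hind i x hxi y hy.2 hy.1
  have hsum : ∑ i : Fin 4, (G.neighborFinset x ∩ Vs i).card = s x := by
    rw [hs]
    have heq : ∀ i : Fin 4, G.neighborFinset x ∩ Vs i =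
        (G.neighborFinset x ∩ M).filter (· ∈ Vs i) := by
      intro i; ext y
      simp only [Finset.mem_inter, Finset.mem_filter]
      constructor
      · rintro ⟨h1, h2⟩; exact ⟨⟨h1, hsub i h2⟩, h2⟩
      · rintro ⟨⟨h1, _⟩, h2⟩; exact ⟨h1, h2⟩
    simp_rw [heq, Finset.card_filter]
    rw [Finset.sum_comm]
    refine Finset.sum_congr rfl fun y hy => ?_
    rw [hc y, Finset.card_filter]
  have hcsum : (∑ i : Fin 4, (if x ∈ Vs i then (1:ℝ) else 0)) = (c x : ℝ) := by
    rw [Finset.sum_boole, hc x]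
  constructor
  · intro hd3
    have hterm : ∀ i : Fin 4, utilAt G M (Vs i) x =
        ((4/5:ℝ)*G.degree x + 1)*(if x ∈ Vs i then (1:ℝ) else 0)
          + (1/5:ℝ)*((G.neighborFinset x ∩ Vs i).card : ℝ) - 1 := by
      intro i
      have hc3 : min (G.degree x) 3 = G.degree x := min_eq_left hd3
      unfold utilAt phi phiDel
      by_cases hxi : x ∈ Vs i
      · rw [if_pos hxi, if_pos hxi, hc3, ha0 i hxi]
        simp only [Finset.card_empty, Nat.cast_zero]
        ring
      · rw [if_neg hxi, if_neg hxi, if_pos hx, hc3]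
        have hsd : (G.neighborFinset x \ Vs i).card + (G.neighborFinset x ∩ Vs i).card
            = G.degree x := by
          rw [Finset.card_sdiff_add_card_inter, hdeg]
        have hle : (G.neighborFinset x \ Vs i).card ≤ 3 := by omega
        rw [min_eq_left hle]
        have hcast : ((G.neighborFinset x \ Vs i).card : ℝ)
            + ((G.neighborFinset x ∩ Vs i).card : ℝ) = (G.degree x : ℝ) := by
          exact_mod_cast hsd
        simp only [mul_zero, mul_one]
        linarith
    rw [hu x]
    simp_rw [hterm]
    rw [Finset.sum_sub_distrib, Finset.sum_add_distrib, ← Finset.mul_sum, ← Finset.mul_sum,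
      hcsum]
    have : (∑ i : Fin 4, ((G.neighborFinset x ∩ Vs i).card : ℝ)) = (s x : ℝ) := by
      rw [← Nat.cast_sum, hsum]
    rw [this]
    simp
  · intro hd4
    have hterm : ∀ i : Fin 4, (if x ∈ Vs i then (4:ℝ) else 0) - 1 ≤ utilAt G M (Vs i) x := by
      intro i
      unfold utilAt phi phiDel
      by_cases hxi : x ∈ Vs i
      · rw [if_pos hxi, if_pos hxi]
        have hc3 : min (G.degree x) 3 = 3 := min_eq_right (by omega)
        rw [hc3]
        have hd4' : (4:ℝ) ≤ (G.degree x : ℝ) := by exact_mod_cast hd4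
        push_cast
        linarith
      · rw [if_neg hxi, if_neg hxi, if_pos hx]
        have hmono : min ((G.neighborFinset x \ Vs i).card) 3 ≤ min (G.degree x) 3 := by
          refine min_le_min ?_ le_rfl
          rw [← hdeg]; exact Finset.card_le_card Finset.sdiff_subset
        have hmono' : ((min ((G.neighborFinset x \ Vs i).card) 3 : ℕ) : ℝ)
            ≤ ((min (G.degree x) 3 : ℕ) : ℝ) := by exact_mod_cast hmono
        linarith
    rw [hu x]
    have hle := Finset.sum_le_sum (fun i (_ : i ∈ Finset.univ) => hterm i)
    have h4 : ∀ i : Fin 4, (if x ∈ Vs i then (4:ℝ) else 0) = 4 * (if x ∈ Vs i then (1:ℝ) else 0) := by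
      intro i; split <;> ring
    rw [Finset.sum_sub_distrib] at hle
    simp_rw [h4] at hle
    rw [← Finset.mul_sum, hcsum] at hle
    simp at hle
    linarith
end
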